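/- arXiv:1707.02222 — 5 statements merged into one kernel-verified Lean document; each statement's English description precedes it below -/
import Mathlib

section
/- Let M = [[A, B],[Bᴴ, D]] be Hermitian positive semidefinite with D possibly singular, and suppose the null space (kernel) of D is contained in the null space of B (i.e., Dv = 0 implies Bv = 0). Then rank(M) = rank(D) + rank(A − B D⁺ Bᴴ), where D⁺ is the Moore–Penrose pseudoinverse. -/
open Matrix ComplexOrder

/-- `P` is the Moore–Penrose pseudoinverse of `D`. -/
def IsMoorePenroseInv {m n : ℕ} (D : Matrix (Fin m) (Fin n) ℂ)
    (P : Matrix (Fin n) (Fin m) ℂ) : Prop :=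
  D * P * D = D ∧ P * D * P = P ∧ (D * P)ᴴ = D * P ∧ (P * D)ᴴ = P * D

/-- Uniqueness of the Moore–Penrose pseudoinverse. -/
lemma mp_unique {m n : ℕ} (D : Matrix (Fin m) (Fin n) ℂ)
    (P Q : Matrix (Fin n) (Fin m) ℂ)
    (hP : IsMoorePenroseInv D P) (hQ : IsMoorePenroseInv D Q) : P = Q := by
  obtain ⟨hP1, hP2, hP3, hP4⟩ := hP
  obtain ⟨hQ1, hQ2, hQ3, hQ4⟩ := hQ
  have hDP : D * P = D * Q := by
    calc D * P = (D * P)ᴴ := hP3.symm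
      _ = ((D * Q * D) * P)ᴴ := by rw [hQ1]
      _ = ((D * Q) * (D * P))ᴴ := by rw [Matrix.mul_assoc (D * Q) D P]
      _ = (D * P)ᴴ * (D * Q)ᴴ := conjTranspose_mul _ _
      _ = (D * P) * (D * Q) := by rw [hP3, hQ3]
      _ = (D * P * D) * Q := by rw [Matrix.mul_assoc (D * P) D Q, Matrix.mul_assoc]
      _ = D * Q := by rw [hP1]
  have hPD : P * D = Q * D := by
    calc P * D = (P * D)ᴴ := hP4.symm
      _ = (P * (D * Q * D))ᴴ := by rw [hQ1]
      _ = ((P * D) * (Q * D))ᴴ := by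
          rw [Matrix.mul_assoc P D (Q * D), Matrix.mul_assoc D Q D]
      _ = (Q * D)ᴴ * (P * D)ᴴ := conjTranspose_mul _ _
      _ = (Q * D) * (P * D) := by rw [hP4, hQ4]
      _ = Q * (D * P * D) := by rw [Matrix.mul_assoc Q D (P * D), Matrix.mul_assoc]
      _ = Q * D := by rw [hP1]
  calc P = P * D * P := hP2.symm
    _ = Q * D * P := by rw [hPD]
    _ = Q * (D * P) := Matrix.mul_assoc _ _ _
    _ = Q * (D * Q) := by rw [hDP]
    _ = Q * D * Q := (Matrix.mul_assoc _ _ _).symm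
    _ = Q := hQ2

/-- rank of a block diagonal matrix. -/
lemma rank_fromBlocks_diag {r d : ℕ} (S : Matrix (Fin r) (Fin r) ℂ)
    (D : Matrix (Fin d) (Fin d) ℂ) :
    (fromBlocks S 0 0 D).rank = S.rank + D.rank := by
  classical
  -- embeddings
  let L1 : (Fin r → ℂ) →ₗ[ℂ] (Fin r ⊕ Fin d → ℂ) :=
    { toFun := fun x => Sum.elim x 0
      map_add' := by intro x y; funext i; cases i <;> simp
      map_smul' := by intro c x; funext i; cases i <;> simp }
  let L2 : (Fin d → ℂ) →ₗ[ℂ] (Fin r ⊕ Fin d → ℂ) :=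
    { toFun := fun y => Sum.elim 0 y
      map_add' := by intro x y; funext i; cases i <;> simp
      map_smul' := by intro c x; funext i; cases i <;> simp }
  have hL1inj : Function.Injective L1 := by
    intro x y h
    funext i
    exact congrFun h (Sum.inl i)
  have hL2inj : Function.Injective L2 := by
    intro x y h
    funext i
    exact congrFun h (Sum.inr i)
  have helim : ∀ (w : Fin r → ℂ) (z : Fin d → ℂ), L1 w + L2 z = Sum.elim w z := by
    intro w z
    funext i
    cases i <;> simp [L1, L2]
  have hrange : LinearMap.range (fromBlocks S 0 0 D).mulVecLin =
      (LinearMap.range S.mulVecLin).map L1 ⊔ (LinearMap.range D.mulVecLin).map L2 := by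
    apply le_antisymm
    · rintro v ⟨u, rfl⟩
      have hu : u = Sum.elim (u ∘ Sum.inl) (u ∘ Sum.inr) := by
        funext i; cases i <;> rfl
      rw [Submodule.mem_sup]
      refine ⟨L1 (S.mulVec (u ∘ Sum.inl)), ⟨_, ⟨_, rfl⟩, rfl⟩,
        L2 (D.mulVec (u ∘ Sum.inr)), ⟨_, ⟨_, rfl⟩, rfl⟩, ?_⟩
      rw [helim, mulVecLin_apply, hu, fromBlocks_mulVec]
      congr 1 <;> simp
    · rw [sup_le_iff]
      constructor
      · rintro v ⟨_, ⟨x, rfl⟩, rfl⟩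
        refine ⟨Sum.elim x 0, ?_⟩
        rw [mulVecLin_apply, fromBlocks_mulVec, mulVecLin_apply]
        funext i
        cases i <;> simp [L1]
      · rintro v ⟨_, ⟨y, rfl⟩, rfl⟩
        refine ⟨Sum.elim 0 y, ?_⟩
        rw [mulVecLin_apply, fromBlocks_mulVec, mulVecLin_apply]
        funext i
        cases i <;> simp [L2]
  have hinf : (LinearMap.range S.mulVecLin).map L1 ⊓ (LinearMap.range D.mulVecLin).map L2 = ⊥ := by
    rw [eq_bot_iff]
    rintro v ⟨⟨_, ⟨x, rfl⟩, rfl⟩, ⟨_, ⟨y, rfl⟩, hv⟩⟩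
    have : ∀ i, L1 (S.mulVec x) i = 0 := by
      intro i
      cases i with
      | inl i =>
        have := congrFun hv (Sum.inl i)
        simp [L1, L2] at this ⊢
        exact this.symm
      | inr i => simp [L1]
    simpa [Submodule.mem_bot] using (funext this : _ = (0 : Fin r ⊕ Fin d → ℂ))
  have e1 : Module.finrank ℂ ((LinearMap.range S.mulVecLin).map L1) = S.rank :=
    (LinearEquiv.finrank_eq (Submodule.equivMapOfInjective L1 hL1inj _)).symm
  have e2 : Module.finrank ℂ ((LinearMap.range D.mulVecLin).map L2) = D.rank :=
    (LinearEquiv.finrank_eq (Submodule.equivMapOfInjective L2 hL2inj _)).symm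
  have hsum := Submodule.finrank_sup_add_finrank_inf_eq
    ((LinearMap.range S.mulVecLin).map L1) ((LinearMap.range D.mulVecLin).map L2)
  rw [hinf, finrank_bot, Nat.add_zero, e1, e2] at hsum
  rw [Matrix.rank, hrange, hsum]

/-- Generalized Schur complement rank additivity: if `M = [[A,B],[Bᴴ,D]]` is
Hermitian positive semidefinite with (possibly singular) `D` whose kernel is
contained in the kernel of `B`, then
`rank M = rank D + rank (A − B D⁺ Bᴴ)` for the Moore–Penrose pseudoinverse `D⁺`. -/
theorem generalized_schur_complement_rank_additivity
    (r d : ℕ) (A : Matrix (Fin r) (Fin r) ℂ) (B : Matrix (Fin r) (Fin d) ℂ)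
    (D : Matrix (Fin d) (Fin d) ℂ) (Dp : Matrix (Fin d) (Fin d) ℂ)
    (hM : (Matrix.fromBlocks A B Bᴴ D).PosSemidef)
    (hker : ∀ v : Fin d → ℂ, D.mulVec v = 0 → B.mulVec v = 0)
    (hDp : IsMoorePenroseInv D Dp) :
    (Matrix.fromBlocks A B Bᴴ D).rank = D.rank + (A - B * Dp * Bᴴ).rank := by
  classical
  obtain ⟨hDp1, hDp2, hDp3, hDp4⟩ := hDp
  -- D is Hermitian
  have hDh : Dᴴ = D := by
    have h := hM.isHermitian
    have := congrArg Matrix.toBlocks₂₂ h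
    simpa [Matrix.fromBlocks_conjTranspose, Matrix.toBlocks_fromBlocks₂₂] using this
  -- Dp is Hermitian
  have hDph : Dpᴴ = Dp := by
    apply mp_unique D
    · refine ⟨?_, ?_, ?_, ?_⟩
      · have h := congrArg conjTranspose hDp1
        simp only [conjTranspose_mul, hDh, Matrix.mul_assoc] at h ⊢
        exact h
      · have h := congrArg conjTranspose hDp2
        simp only [conjTranspose_mul, hDh, Matrix.mul_assoc] at h ⊢
        exact h
      · calc (D * Dpᴴ)ᴴ = Dp * Dᴴ := by rw [conjTranspose_mul, conjTranspose_conjTranspose]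
          _ = Dp * D := by rw [hDh]
          _ = (Dp * D)ᴴ := hDp4.symm
          _ = Dᴴ * Dpᴴ := by rw [conjTranspose_mul]
          _ = D * Dpᴴ := by rw [hDh]
      · calc (Dpᴴ * D)ᴴ = Dᴴ * Dp := by rw [conjTranspose_mul, conjTranspose_conjTranspose]
          _ = D * Dp := by rw [hDh]
          _ = (D * Dp)ᴴ := hDp3.symm
          _ = Dpᴴ * Dᴴ := by rw [conjTranspose_mul]
          _ = Dpᴴ * D := by rw [hDh]
    · exact ⟨hDp1, hDp2, hDp3, hDp4⟩
  -- B * Dp * D = B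
  have hBDpD : B * Dp * D = B := by
    have h0 : B * (Dp * D - 1) = 0 := by
      ext i j
      have hv : D.mulVec (fun k => (Dp * D - 1) k j) = 0 := by
        funext i'
        have hz : D * (Dp * D - 1) = 0 := by
          rw [Matrix.mul_sub, Matrix.mul_one, ← Matrix.mul_assoc, hDp1, sub_self]
        have h := congrFun (congrFun hz i') j
        simpa [Matrix.mul_apply, Matrix.mulVec, dotProduct] using h
      have hb := congrFun (hker _ hv) i
      simpa [Matrix.mul_apply, Matrix.mulVec, dotProduct] using hb
    rw [Matrix.mul_sub, Matrix.mul_one, sub_eq_zero, ← Matrix.mul_assoc] at h0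
    exact h0
  -- D * Dp * Bᴴ = Bᴴ
  have hDDpBh : D * (Dp * Bᴴ) = Bᴴ := by
    have := congrArg conjTranspose hBDpD
    rw [conjTranspose_mul, conjTranspose_mul, hDh, hDph] at this
    rw [← Matrix.mul_assoc] at this ⊢
    exact this
  set S := A - B * Dp * Bᴴ with hS
  -- the congruence
  set X := B * Dp with hX
  have hXD : X * D = B := by rw [hX, hBDpD]
  have hXh : Xᴴ = Dp * Bᴴ := by rw [hX, conjTranspose_mul, hDph]
  have hSA : S + B * Dp * Bᴴ = A := by rw [hS]; abel
  have key : fromBlocks (1 : Matrix (Fin r) (Fin r) ℂ) X 0 (1 : Matrix (Fin d) (Fin d) ℂ) *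
      fromBlocks S 0 0 D *
      fromBlocks (1 : Matrix (Fin r) (Fin r) ℂ) 0 Xᴴ (1 : Matrix (Fin d) (Fin d) ℂ) =
      fromBlocks A B Bᴴ D := by
    rw [Matrix.fromBlocks_multiply, Matrix.fromBlocks_multiply]
    simp only [Matrix.one_mul, Matrix.mul_zero, Matrix.zero_mul, Matrix.mul_one,
      add_zero, zero_add]
    rw [hXD, hXh, hDDpBh, ← Matrix.mul_assoc B Dp Bᴴ, hSA]
  -- rank invariance
  have hdetU : IsUnit (fromBlocks (1 : Matrix (Fin r) (Fin r) ℂ) X 0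
      (1 : Matrix (Fin d) (Fin d) ℂ)).det := by
    rw [Matrix.det_fromBlocks_zero₂₁]
    simp
  have hdetV : IsUnit (fromBlocks (1 : Matrix (Fin r) (Fin r) ℂ) 0 Xᴴ
      (1 : Matrix (Fin d) (Fin d) ℂ)).det := by
    rw [Matrix.det_fromBlocks_zero₁₂]
    simp
  calc (fromBlocks A B Bᴴ D).rank
      = (fromBlocks (1 : Matrix (Fin r) (Fin r) ℂ) X 0 (1 : Matrix (Fin d) (Fin d) ℂ) *
          fromBlocks S 0 0 D *
          fromBlocks (1 : Matrix (Fin r) (Fin r) ℂ) 0 Xᴴ (1 : Matrix (Fin d) (Fin d) ℂ)).rank := by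
        rw [key]
    _ = (fromBlocks (1 : Matrix (Fin r) (Fin r) ℂ) X 0 (1 : Matrix (Fin d) (Fin d) ℂ) *
          fromBlocks S 0 0 D).rank := by
        rw [Matrix.rank_mul_eq_left_of_isUnit_det _ _ hdetV]
    _ = (fromBlocks S 0 0 D).rank := by
        rw [Matrix.rank_mul_eq_right_of_isUnit_det _ _ hdetU]
    _ = S.rank + D.rank := rank_fromBlocks_diag S D
    _ = D.rank + S.rank := Nat.add_comm _ _
end

section
/- Let A, B be r×r Hermitian positive definite matrices and denote by λ_i(AB^{-1}) the i-th largest eigenvalue of AB^{-1} (equivalently the i-th largest generalized eigenvalue of the pair (A,B)). Then for all valid indices: λ_{k+i}(A)/λ_{k+1}(B) ≤ λ_i(AB^{-1}) ≤ λ_1(A)/λ_{r−i+1}(B), and also λ_i(AB^{-1}) ≤ λ_i(A)/λ_r(B). -/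
open Matrix ComplexOrder
open scoped MatrixOrder

/-- The `i`-th largest value of a tuple `f : Fin n → ℝ` (0-indexed: `i = 0`
gives the largest). -/
noncomputable def ithLargest {n : ℕ} (f : Fin n → ℝ) (i : Fin n) : ℝ :=
  (f ∘ Tuple.sort f) i.rev

namespace EVB
variable {r : ℕ}


/-- submodule of vectors supported on `T` -/
noncomputable def U (T : Finset (Fin r)) : Submodule ℂ (Fin r → ℂ) where
  carrier := {x | ∀ l ∉ T, x l = 0}
  add_mem' hx hy l hl := by simp [hx l hl, hy l hl]
  zero_mem' := by simp
  smul_mem' c x hx l hl := by simp [hx l hl]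

lemma mem_U {T : Finset (Fin r)} {x : Fin r → ℂ} : x ∈ U T ↔ ∀ l ∉ T, x l = 0 := Iff.rfl

lemma card_le_finrank_U (T : Finset (Fin r)) : T.card ≤ Module.finrank ℂ (U T) := by
  have hli : LinearIndependent ℂ (fun l : T => (Pi.single (l : Fin r) 1 : Fin r → ℂ)) := by
    have := (Pi.basisFun ℂ (Fin r)).linearIndependent
    have h2 := this.comp (Subtype.val : T → Fin r) Subtype.val_injective
    simpa [Function.comp_def, Pi.basisFun_apply] using h2
  have hspan : Submodule.span ℂ (Set.range fun l : T => (Pi.single (l : Fin r) 1 : Fin r → ℂ)) ≤ U T := by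
    rw [Submodule.span_le]
    rintro _ ⟨l, rfl⟩ m hm
    exact Pi.single_eq_of_ne (fun h : m = (l : Fin r) => hm (h ▸ l.2)) 1
  calc T.card = Fintype.card T := (Fintype.card_coe T).symm
    _ = Module.finrank ℂ (Submodule.span ℂ (Set.range fun l : T => (Pi.single (l : Fin r) 1 : Fin r → ℂ))) := (finrank_span_eq_card hli).symm
    _ ≤ _ := Submodule.finrank_mono hspan

/-- linear equivalence from an invertible matrix pair -/
noncomputable def mve (P Q : Matrix (Fin r) (Fin r) ℂ) (h1 : P * Q = 1) (h2 : Q * P = 1) :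
    (Fin r → ℂ) ≃ₗ[ℂ] (Fin r → ℂ) :=
  LinearEquiv.ofLinear P.mulVecLin Q.mulVecLin
    (by rw [← Matrix.mulVecLin_mul, h1, Matrix.mulVecLin_one])
    (by rw [← Matrix.mulVecLin_mul, h2, Matrix.mulVecLin_one])

@[simp] lemma mve_apply (P Q h1 h2) (x : Fin r → ℂ) : mve P Q h1 h2 x = P *ᵥ x := rfl
@[simp] lemma mve_symm_apply (P Q h1 h2) (x : Fin r → ℂ) : (mve P Q h1 h2).symm x = Q *ᵥ x := rfl

lemma exists_mem_inf (W1 W2 : Submodule ℂ (Fin r → ℂ)) (d1 d2 : ℕ)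
    (h1 : d1 ≤ Module.finrank ℂ W1) (h2 : d2 ≤ Module.finrank ℂ W2) (h : r < d1 + d2) :
    ∃ x : Fin r → ℂ, x ≠ 0 ∧ x ∈ W1 ∧ x ∈ W2 := by
  have key := Submodule.finrank_sup_add_finrank_inf_eq W1 W2
  have hle : Module.finrank ℂ ↥(W1 ⊔ W2) ≤ r := by
    simpa [Module.finrank_fintype_fun_eq_card] using (W1 ⊔ W2).finrank_le
  have hpos : 0 < Module.finrank ℂ ↥(W1 ⊓ W2) := by omega
  have : Nontrivial ↥(W1 ⊓ W2) := Module.nontrivial_of_finrank_pos hpos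
  obtain ⟨y, hy⟩ := exists_ne (0 : ↥(W1 ⊓ W2))
  refine ⟨y.1, ?_, (Submodule.mem_inf.mp y.2).1, (Submodule.mem_inf.mp y.2).2⟩
  simpa [Submodule.coe_eq_zero] using hy

lemma finrank_inf_ge (W1 W2 : Submodule ℂ (Fin r → ℂ)) (d1 d2 : ℕ)
    (h1 : d1 ≤ Module.finrank ℂ W1) (h2 : d2 ≤ Module.finrank ℂ W2) :
    d1 + d2 - r ≤ Module.finrank ℂ ↥(W1 ⊓ W2) := by
  have key := Submodule.finrank_sup_add_finrank_inf_eq W1 W2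
  have hle : Module.finrank ℂ ↥(W1 ⊔ W2) ≤ r := by
    simpa [Module.finrank_fintype_fun_eq_card] using (W1 ⊔ W2).finrank_le
  omega


section Herm
variable {H : Matrix (Fin r) (Fin r) ℂ}


/-- coordinates of `x` in the eigenbasis of `H` -/
noncomputable def co (hH : H.IsHermitian) (x : Fin r → ℂ) : Fin r → ℂ :=
  star (hH.eigenvectorUnitary : Matrix (Fin r) (Fin r) ℂ) *ᵥ x

lemma co_def (hH : H.IsHermitian) (x : Fin r → ℂ) :
    star (hH.eigenvectorUnitary : Matrix (Fin r) (Fin r) ℂ) *ᵥ x = co hH x := rfl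

lemma conj_mul_self (z : ℂ) : star z * z = ((‖z‖ ^ 2 : ℝ) : ℂ) := by
  rw [RCLike.star_def, mul_comm, Complex.mul_conj']
  norm_cast

lemma dot_self_eq (x : Fin r → ℂ) : star x ⬝ᵥ x = ((∑ l, ‖x l‖ ^ 2 : ℝ) : ℂ) := by
  rw [dotProduct, Complex.ofReal_sum]
  exact Finset.sum_congr rfl fun l _ => conj_mul_self (x l)

lemma sum_co_pos (hH : H.IsHermitian) {x : Fin r → ℂ} (hx : x ≠ 0) :
    0 < ∑ l, ‖co hH x l‖ ^ 2 := by
  have hco : co hH x ≠ 0 := by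
    intro h
    apply hx
    have := congrArg (fun v => (hH.eigenvectorUnitary : Matrix (Fin r) (Fin r) ℂ) *ᵥ v) h
    simpa [co, Matrix.mulVec_mulVec, (Matrix.mem_unitaryGroup_iff).mp hH.eigenvectorUnitary.2] using this
  obtain ⟨l, hl⟩ := Function.ne_iff.mp hco
  exact Finset.sum_pos' (fun l _ => by positivity)
    ⟨l, Finset.mem_univ l, pow_pos (norm_pos_iff.2 hl) 2⟩

lemma quadform_eq (hH : H.IsHermitian) (x : Fin r → ℂ) :
    star x ⬝ᵥ (H *ᵥ x) = ((∑ l, hH.eigenvalues l * ‖co hH x l‖ ^ 2 : ℝ) : ℂ) := by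
  set V := (hH.eigenvectorUnitary : Matrix (Fin r) (Fin r) ℂ) with hV
  have hsx : star x ᵥ* V = star (co hH x) := by
    rw [co, star_mulVec]
    simp [Matrix.star_eq_conjTranspose]
    rfl
  calc star x ⬝ᵥ (H *ᵥ x)
      = star x ⬝ᵥ ((V * diagonal (RCLike.ofReal ∘ hH.eigenvalues) * star V) *ᵥ x) := by
        conv_lhs => rw [hH.spectral_theorem]
        rfl
    _ = (star x ᵥ* V) ⬝ᵥ (diagonal (RCLike.ofReal ∘ hH.eigenvalues) *ᵥ (star V *ᵥ x)) := by
        rw [← Matrix.mulVec_mulVec, ← Matrix.mulVec_mulVec, Matrix.dotProduct_mulVec]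
    _ = star (co hH x) ⬝ᵥ (diagonal (RCLike.ofReal ∘ hH.eigenvalues) *ᵥ co hH x) := by
        rw [hsx, co_def]
    _ = _ := by
        rw [dotProduct, Complex.ofReal_sum]
        refine Finset.sum_congr rfl fun l _ => ?_
        rw [Matrix.mulVec_diagonal, Pi.star_apply, Function.comp_apply,
          show star (co hH x l) * (RCLike.ofReal (hH.eigenvalues l) * co hH x l)
            = RCLike.ofReal (hH.eigenvalues l) * (star (co hH x l) * co hH x l) by ring,
          conj_mul_self]
        rw [Complex.ofReal_mul]
        rfl

lemma norm_eq (hH : H.IsHermitian) (x : Fin r → ℂ) :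
    star x ⬝ᵥ x = ((∑ l, ‖co hH x l‖ ^ 2 : ℝ) : ℂ) := by
  set V := (hH.eigenvectorUnitary : Matrix (Fin r) (Fin r) ℂ) with hV
  have hsx : star x ᵥ* V = star (co hH x) := by
    rw [co, star_mulVec]
    simp [Matrix.star_eq_conjTranspose]
    rfl
  calc star x ⬝ᵥ x
      = star x ⬝ᵥ ((V * star V) *ᵥ x) := by
        rw [(Matrix.mem_unitaryGroup_iff).mp hH.eigenvectorUnitary.2, Matrix.one_mulVec]
    _ = (star x ᵥ* V) ⬝ᵥ (star V *ᵥ x) := by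
        rw [← Matrix.mulVec_mulVec, Matrix.dotProduct_mulVec]
    _ = star (co hH x) ⬝ᵥ co hH x := by rw [hsx, co_def]
    _ = _ := dot_self_eq _


end Herm



lemma ithLargest_eq {n : ℕ} (f : Fin n → ℝ) (i : Fin n) :
    ithLargest f i = f (Tuple.sort f i.rev) := rfl

lemma le_ithLargest_of_mem {n : ℕ} (f : Fin n → ℝ) (i : Fin n) {l : Fin n}
    (hl : l ∈ (Finset.Ici i.rev).image (Tuple.sort f)) : ithLargest f i ≤ f l := by
  obtain ⟨p, hp, rfl⟩ := Finset.mem_image.mp hl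
  exact Tuple.monotone_sort f (Finset.mem_Ici.mp hp)

lemma ithLargest_ge_of_mem {n : ℕ} (f : Fin n → ℝ) (i : Fin n) {l : Fin n}
    (hl : l ∈ (Finset.Iic i.rev).image (Tuple.sort f)) : f l ≤ ithLargest f i := by
  obtain ⟨p, hp, rfl⟩ := Finset.mem_image.mp hl
  exact Tuple.monotone_sort f (Finset.mem_Iic.mp hp)

lemma le_ithLargest_zero {n : ℕ} (f : Fin n → ℝ) (h : 0 < n) (l : Fin n) :
    f l ≤ ithLargest f ⟨0, h⟩ := by
  have : l = Tuple.sort f ((Tuple.sort f).symm l) := (Equiv.apply_symm_apply _ _).symm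
  rw [this, ithLargest_eq]
  apply Tuple.monotone_sort f
  rw [Fin.le_def, Fin.val_rev]
  simp only [Fin.val_mk]
  have := ((Tuple.sort f).symm l).isLt
  omega

lemma ithLargest_last_le {n : ℕ} (f : Fin n → ℝ) (h : 0 < n) (l : Fin n) :
    ithLargest f ⟨n - 1, by omega⟩ ≤ f l := by
  have : l = Tuple.sort f ((Tuple.sort f).symm l) := (Equiv.apply_symm_apply _ _).symm
  rw [this, ithLargest_eq]
  apply Tuple.monotone_sort f
  rw [Fin.le_def, Fin.val_rev]
  simp only [Fin.val_mk]
  have := ((Tuple.sort f).symm l).isLt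
  omega

lemma card_hi (f : Fin r → ℝ) (i : Fin r) :
    ((Finset.Ici i.rev).image (Tuple.sort f)).card = i + 1 := by
  rw [Finset.card_image_of_injective _ (Tuple.sort f).injective, Fin.card_Ici, Fin.val_rev]
  omega

lemma card_lo (f : Fin r → ℝ) (i : Fin r) :
    ((Finset.Iic i.rev).image (Tuple.sort f)).card = r - i := by
  rw [Finset.card_image_of_injective _ (Tuple.sort f).injective, Fin.card_Iic, Fin.val_rev]
  have := i.isLt
  omega


section Herm2
variable {H : Matrix (Fin r) (Fin r) ℂ}

noncomputable def eigEquiv (hH : H.IsHermitian) : (Fin r → ℂ) ≃ₗ[ℂ] (Fin r → ℂ) :=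
  mve (hH.eigenvectorUnitary : Matrix (Fin r) (Fin r) ℂ)
    (star (hH.eigenvectorUnitary : Matrix (Fin r) (Fin r) ℂ))
    ((Matrix.mem_unitaryGroup_iff).mp hH.eigenvectorUnitary.2)
    (mul_eq_one_comm.mp ((Matrix.mem_unitaryGroup_iff).mp hH.eigenvectorUnitary.2))

noncomputable def ES (hH : H.IsHermitian) (T : Finset (Fin r)) : Submodule ℂ (Fin r → ℂ) :=
  (U T).map ((eigEquiv hH : (Fin r → ℂ) →ₗ[ℂ] (Fin r → ℂ)))

lemma mem_ES_iff {hH : H.IsHermitian} {T : Finset (Fin r)} {x : Fin r → ℂ} :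
    x ∈ ES hH T ↔ ∀ l ∉ T, co hH x l = 0 := by
  rw [ES, Submodule.mem_map_equiv]
  exact Iff.rfl

lemma mem_ES {hH : H.IsHermitian} {T : Finset (Fin r)} {x : Fin r → ℂ} (hx : x ∈ ES hH T) :
    ∀ l ∉ T, co hH x l = 0 := mem_ES_iff.mp hx

lemma card_le_finrank_ES (hH : H.IsHermitian) (T : Finset (Fin r)) :
    T.card ≤ Module.finrank ℂ (ES hH T) := by
  rw [ES, LinearEquiv.finrank_map_eq]
  exact card_le_finrank_U T

noncomputable def HiS (hH : H.IsHermitian) (i : Fin r) : Submodule ℂ (Fin r → ℂ) :=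
  ES hH ((Finset.Ici i.rev).image (Tuple.sort hH.eigenvalues))

noncomputable def LoS (hH : H.IsHermitian) (i : Fin r) : Submodule ℂ (Fin r → ℂ) :=
  ES hH ((Finset.Iic i.rev).image (Tuple.sort hH.eigenvalues))

lemma finrank_HiS (hH : H.IsHermitian) (i : Fin r) :
    (i : ℕ) + 1 ≤ Module.finrank ℂ (HiS hH i) :=
  (card_hi hH.eigenvalues i) ▸ card_le_finrank_ES hH _

lemma finrank_LoS (hH : H.IsHermitian) (i : Fin r) :
    r - (i : ℕ) ≤ Module.finrank ℂ (LoS hH i) :=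
  (card_lo hH.eigenvalues i) ▸ card_le_finrank_ES hH _

lemma lo_bound (hH : H.IsHermitian) (i : Fin r) {x : Fin r → ℂ} (hx : x ∈ LoS hH i) :
    ∑ l, hH.eigenvalues l * ‖co hH x l‖ ^ 2
      ≤ ithLargest hH.eigenvalues i * ∑ l, ‖co hH x l‖ ^ 2 := by
  set T := (Finset.Iic i.rev).image (Tuple.sort hH.eigenvalues) with hT
  have h0 : ∀ l ∉ T, co hH x l = 0 := mem_ES hx
  have e1 : ∑ l, hH.eigenvalues l * ‖co hH x l‖ ^ 2
      = ∑ l ∈ T, hH.eigenvalues l * ‖co hH x l‖ ^ 2 :=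
    (Finset.sum_subset T.subset_univ (fun l _ hl => by simp [h0 l hl])).symm
  have e2 : ∑ l, ‖co hH x l‖ ^ 2 = ∑ l ∈ T, ‖co hH x l‖ ^ 2 :=
    (Finset.sum_subset T.subset_univ (fun l _ hl => by simp [h0 l hl])).symm
  rw [e1, e2, Finset.mul_sum]
  exact Finset.sum_le_sum fun l hl =>
    mul_le_mul_of_nonneg_right (ithLargest_ge_of_mem _ _ hl) (by positivity)

lemma hi_bound (hH : H.IsHermitian) (i : Fin r) {x : Fin r → ℂ} (hx : x ∈ HiS hH i) :
    ithLargest hH.eigenvalues i * ∑ l, ‖co hH x l‖ ^ 2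
      ≤ ∑ l, hH.eigenvalues l * ‖co hH x l‖ ^ 2 := by
  set T := (Finset.Ici i.rev).image (Tuple.sort hH.eigenvalues) with hT
  have h0 : ∀ l ∉ T, co hH x l = 0 := mem_ES hx
  have e1 : ∑ l, hH.eigenvalues l * ‖co hH x l‖ ^ 2
      = ∑ l ∈ T, hH.eigenvalues l * ‖co hH x l‖ ^ 2 :=
    (Finset.sum_subset T.subset_univ (fun l _ hl => by simp [h0 l hl])).symm
  have e2 : ∑ l, ‖co hH x l‖ ^ 2 = ∑ l ∈ T, ‖co hH x l‖ ^ 2 :=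
    (Finset.sum_subset T.subset_univ (fun l _ hl => by simp [h0 l hl])).symm
  rw [e1, e2, Finset.mul_sum]
  exact Finset.sum_le_sum fun l hl =>
    mul_le_mul_of_nonneg_right (le_ithLargest_of_mem _ _ hl) (by positivity)

lemma glob_hi_bound (hH : H.IsHermitian) (h : 0 < r) (x : Fin r → ℂ) :
    ∑ l, hH.eigenvalues l * ‖co hH x l‖ ^ 2
      ≤ ithLargest hH.eigenvalues ⟨0, h⟩ * ∑ l, ‖co hH x l‖ ^ 2 := by
  rw [Finset.mul_sum]
  exact Finset.sum_le_sum fun l _ =>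
    mul_le_mul_of_nonneg_right (le_ithLargest_zero _ h l) (by positivity)

lemma glob_lo_bound (hH : H.IsHermitian) (h : 0 < r) (x : Fin r → ℂ) :
    ithLargest hH.eigenvalues ⟨r - 1, by omega⟩ * ∑ l, ‖co hH x l‖ ^ 2
      ≤ ∑ l, hH.eigenvalues l * ‖co hH x l‖ ^ 2 := by
  rw [Finset.mul_sum]
  exact Finset.sum_le_sum fun l _ =>
    mul_le_mul_of_nonneg_right (ithLargest_last_le _ h l) (by positivity)

lemma ithLargest_pos {A : Matrix (Fin r) (Fin r) ℂ} (hA : A.PosDef) (i : Fin r) :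
    0 < ithLargest hA.1.eigenvalues i :=
  hA.eigenvalues_pos _

end Herm2

lemma posDef_conj {A C : Matrix (Fin r) (Fin r) ℂ} (hA : A.PosDef) (hC : IsUnit C.det) :
    (Cᴴ * A * C).PosDef := by
  have hCu : IsUnit C := (Matrix.isUnit_iff_isUnit_det C).mpr hC
  exact hA.conjTranspose_mul_mul_same (Matrix.mulVec_injective_iff_isUnit.mpr hCu)

lemma dot_congr {S : Matrix (Fin r) (Fin r) ℂ} (hS : S.IsHermitian)
    (N : Matrix (Fin r) (Fin r) ℂ) (y : Fin r → ℂ) :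
    star (S *ᵥ y) ⬝ᵥ (N *ᵥ (S *ᵥ y)) = star y ⬝ᵥ ((S * N * S) *ᵥ y) := by
  calc star (S *ᵥ y) ⬝ᵥ (N *ᵥ (S *ᵥ y))
      = (star y ᵥ* Sᴴ) ⬝ᵥ ((N * S) *ᵥ y) := by rw [star_mulVec, Matrix.mulVec_mulVec]
    _ = star y ⬝ᵥ (Sᴴ *ᵥ ((N * S) *ᵥ y)) := (Matrix.dotProduct_mulVec _ _ _).symm
    _ = star y ⬝ᵥ ((S * N * S) *ᵥ y) := by
        rw [Matrix.mulVec_mulVec, hS.eq, ← Matrix.mul_assoc]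


end EVB

open EVB in
/-- Eigenvalue bounds for generalized eigenvalues of a pair `(A,B)` of
Hermitian positive definite matrices: `AB⁻¹` is similar to the Hermitian
matrix `M = B^{-1/2} A B^{-1/2}` (characterized by `√B * M * √B = A`), and its
`i`-th largest eigenvalue `λ_i(AB⁻¹)` satisfies (1-indexed)
`λ_{k+i}(A)/λ_{k+1}(B) ≤ λ_i(AB⁻¹) ≤ λ_1(A)/λ_{r−i+1}(B)` and
`λ_i(AB⁻¹) ≤ λ_i(A)/λ_r(B)`. -/
theorem generalized_eigenvalue_bounds
    (r : ℕ) (A B : Matrix (Fin r) (Fin r) ℂ)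
    (hA : A.PosDef) (hB : B.PosDef)
    (M : Matrix (Fin r) (Fin r) ℂ) (hM : M.IsHermitian)
    (hMsim : CFC.sqrt B * M * CFC.sqrt B = A) :
    (∀ i k : Fin r, ∀ h : (i : ℕ) + (k : ℕ) < r,
      ithLargest (hA.1.eigenvalues) ⟨(i : ℕ) + (k : ℕ), h⟩ /
        ithLargest (hB.1.eigenvalues) k ≤ ithLargest (hM.eigenvalues) i) ∧
    (∀ i : Fin r,
      ithLargest (hM.eigenvalues) i ≤
        ithLargest (hA.1.eigenvalues) ⟨0, i.pos⟩ /
          ithLargest (hB.1.eigenvalues) i.rev) ∧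
    (∀ i : Fin r,
      ithLargest (hM.eigenvalues) i ≤
        ithLargest (hA.1.eigenvalues) i /
          ithLargest (hB.1.eigenvalues) ⟨r - 1, by have := i.pos; omega⟩) := by
  classical
  set S := CFC.sqrt B with hSdef
  have hSH : S.IsHermitian := (Matrix.nonneg_iff_posSemidef.mp (CFC.sqrt_nonneg B)).isHermitian
  have hSS : S * S = B := CFC.sqrt_mul_sqrt_self B (Matrix.nonneg_iff_posSemidef.mpr hB.posSemidef)
  have hSu : IsUnit S.det := by
    have hBd : B.det ≠ 0 := hB.det_pos.ne'
    have hd : S.det * S.det = B.det := by rw [← Matrix.det_mul, hSS]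
    exact isUnit_iff_ne_zero.mpr (fun h0 => hBd (by rw [← hd, h0, zero_mul]))
  have h1 : S * S⁻¹ = 1 := Matrix.mul_nonsing_inv S hSu
  have h2 : S⁻¹ * S = 1 := Matrix.nonsing_inv_mul S hSu
  have hSinvH : (S⁻¹).IsHermitian := hSH.inv
  have hSinvU : IsUnit (S⁻¹).det := S.isUnit_nonsing_inv_det hSu
  have hMeq : M = (S⁻¹)ᴴ * A * S⁻¹ := by
    rw [hSinvH.eq, ← hMsim]
    calc M = (S⁻¹ * S) * M * (S * S⁻¹) := by rw [h1, h2, Matrix.one_mul, Matrix.mul_one]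
      _ = S⁻¹ * (S * M * S) * S⁻¹ := by simp only [Matrix.mul_assoc]
  have hMpd : M.PosDef := hMeq ▸ posDef_conj hA hSinvU
  set eS := mve S S⁻¹ h1 h2 with heS
  have idM : ∀ y : Fin r → ℂ, star (S *ᵥ y) ⬝ᵥ (M *ᵥ (S *ᵥ y)) = star y ⬝ᵥ (A *ᵥ y) := by
    intro y; rw [dot_congr hSH M y, hMsim]
  have idB : ∀ y : Fin r → ℂ, star (S *ᵥ y) ⬝ᵥ (S *ᵥ y) = star y ⬝ᵥ (B *ᵥ y) := by
    intro y
    have hd := dot_congr hSH 1 y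
    rwa [Matrix.one_mulVec, Matrix.mul_one, hSS] at hd
  have haMA : ∀ y : Fin r → ℂ,
      (∑ l, hM.eigenvalues l * ‖co hM (S *ᵥ y) l‖ ^ 2)
        = ∑ l, hA.1.eigenvalues l * ‖co hA.1 y l‖ ^ 2 := fun y =>
    Complex.ofReal_inj.mp (by rw [← quadform_eq hM (S *ᵥ y), ← quadform_eq hA.1 y]; exact idM y)
  have hNMB : ∀ y : Fin r → ℂ,
      (∑ l, ‖co hM (S *ᵥ y) l‖ ^ 2) = ∑ l, hB.1.eigenvalues l * ‖co hB.1 y l‖ ^ 2 := fun y =>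
    Complex.ofReal_inj.mp (by rw [← norm_eq hM (S *ᵥ y), ← quadform_eq hB.1 y]; exact idB y)
  have hNAB : ∀ y : Fin r → ℂ,
      (∑ l, ‖co hA.1 y l‖ ^ 2) = ∑ l, ‖co hB.1 y l‖ ^ 2 := fun y =>
    Complex.ofReal_inj.mp (by rw [← norm_eq hA.1 y, ← norm_eq hB.1 y])
  refine ⟨?_, ?_, ?_⟩
  · -- part (1)
    intro i k h
    set j : Fin r := ⟨(i : ℕ) + (k : ℕ), h⟩ with hj
    have hfr1 : r - (i : ℕ) ≤ Module.finrank ℂ ((LoS hM i).map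
        (eS.symm : (Fin r → ℂ) →ₗ[ℂ] (Fin r → ℂ))) := by
      rw [LinearEquiv.finrank_map_eq]
      exact finrank_LoS hM i
    have hfrZ := finrank_inf_ge _ (LoS hB.1 k) (r - (i : ℕ)) (r - (k : ℕ)) hfr1 (finrank_LoS hB.1 k)
    obtain ⟨y, hy0, hyZ, hyHi⟩ := exists_mem_inf _ (HiS hA.1 j)
      ((r - (i : ℕ)) + (r - (k : ℕ)) - r) ((j : ℕ) + 1) hfrZ (finrank_HiS hA.1 j)
      (by have hi := i.isLt; have hk := k.isLt; simp only [hj]; omega)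
    obtain ⟨hyW1, hyLoB⟩ := Submodule.mem_inf.mp hyZ
    obtain ⟨z, hz, hzy⟩ := Submodule.mem_map.mp hyW1
    have hxz : S *ᵥ y = z := by
      rw [← hzy]
      show S *ᵥ (S⁻¹ *ᵥ z) = z
      rw [Matrix.mulVec_mulVec, h1, Matrix.one_mulVec]
    have hxLo : S *ᵥ y ∈ LoS hM i := hxz ▸ hz
    have hN : 0 < ∑ l, ‖co hA.1 y l‖ ^ 2 := sum_co_pos hA.1 hy0
    have hchain : ithLargest hA.1.eigenvalues j * ∑ l, ‖co hA.1 y l‖ ^ 2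
        ≤ (ithLargest hM.eigenvalues i * ithLargest hB.1.eigenvalues k)
            * ∑ l, ‖co hA.1 y l‖ ^ 2 := by
      calc ithLargest hA.1.eigenvalues j * ∑ l, ‖co hA.1 y l‖ ^ 2
          ≤ ∑ l, hA.1.eigenvalues l * ‖co hA.1 y l‖ ^ 2 := hi_bound hA.1 j hyHi
        _ = ∑ l, hM.eigenvalues l * ‖co hM (S *ᵥ y) l‖ ^ 2 := (haMA y).symm
        _ ≤ ithLargest hM.eigenvalues i * ∑ l, ‖co hM (S *ᵥ y) l‖ ^ 2 := lo_bound hM i hxLo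
        _ = ithLargest hM.eigenvalues i * ∑ l, hB.1.eigenvalues l * ‖co hB.1 y l‖ ^ 2 := by
            rw [hNMB y]
        _ ≤ ithLargest hM.eigenvalues i
              * (ithLargest hB.1.eigenvalues k * ∑ l, ‖co hB.1 y l‖ ^ 2) :=
            mul_le_mul_of_nonneg_left (lo_bound hB.1 k hyLoB) (ithLargest_pos hMpd i).le
        _ = (ithLargest hM.eigenvalues i * ithLargest hB.1.eigenvalues k)
              * ∑ l, ‖co hA.1 y l‖ ^ 2 := by rw [hNAB y]; ring
    have hfin : ithLargest hA.1.eigenvalues j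
        ≤ ithLargest hM.eigenvalues i * ithLargest hB.1.eigenvalues k :=
      le_of_mul_le_mul_right hchain hN
    exact (div_le_iff₀ (ithLargest_pos hB k)).mpr hfin
  · -- part (2)
    intro i
    have hr : 0 < r := i.pos
    have hfr1 : r - (i : ℕ) ≤ Module.finrank ℂ ((HiS hB.1 i.rev).map
        (eS : (Fin r → ℂ) →ₗ[ℂ] (Fin r → ℂ))) := by
      rw [LinearEquiv.finrank_map_eq]
      refine le_trans ?_ (finrank_HiS hB.1 i.rev)
      rw [Fin.val_rev]
      omega
    obtain ⟨x, hx0, hxW1, hxHiM⟩ := exists_mem_inf _ (HiS hM i)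
      (r - (i : ℕ)) ((i : ℕ) + 1) hfr1 (finrank_HiS hM i)
      (by have hi := i.isLt; omega)
    obtain ⟨y, hyHiB, hyx⟩ := Submodule.mem_map.mp hxW1
    have hyx' : S *ᵥ y = x := hyx
    have hy0 : y ≠ 0 := by
      intro h0
      apply hx0
      rw [← hyx', h0, Matrix.mulVec_zero]
    rw [← hyx'] at hxHiM
    have hN : 0 < ∑ l, ‖co hA.1 y l‖ ^ 2 := sum_co_pos hA.1 hy0
    have hchain : (ithLargest hM.eigenvalues i * ithLargest hB.1.eigenvalues i.rev)
          * ∑ l, ‖co hA.1 y l‖ ^ 2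
        ≤ ithLargest hA.1.eigenvalues ⟨0, i.pos⟩ * ∑ l, ‖co hA.1 y l‖ ^ 2 := by
      calc (ithLargest hM.eigenvalues i * ithLargest hB.1.eigenvalues i.rev)
            * ∑ l, ‖co hA.1 y l‖ ^ 2
          = ithLargest hM.eigenvalues i
              * (ithLargest hB.1.eigenvalues i.rev * ∑ l, ‖co hB.1 y l‖ ^ 2) := by
            rw [hNAB y]; ring
        _ ≤ ithLargest hM.eigenvalues i
              * (∑ l, hB.1.eigenvalues l * ‖co hB.1 y l‖ ^ 2) :=
            mul_le_mul_of_nonneg_left (hi_bound hB.1 i.rev hyHiB) (ithLargest_pos hMpd i).le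
        _ = ithLargest hM.eigenvalues i * ∑ l, ‖co hM (S *ᵥ y) l‖ ^ 2 := by rw [hNMB y]
        _ ≤ ∑ l, hM.eigenvalues l * ‖co hM (S *ᵥ y) l‖ ^ 2 := hi_bound hM i hxHiM
        _ = ∑ l, hA.1.eigenvalues l * ‖co hA.1 y l‖ ^ 2 := haMA y
        _ ≤ ithLargest hA.1.eigenvalues ⟨0, i.pos⟩ * ∑ l, ‖co hA.1 y l‖ ^ 2 :=
            glob_hi_bound hA.1 i.pos y
    have hfin := le_of_mul_le_mul_right hchain hN
    exact (le_div_iff₀ (ithLargest_pos hB i.rev)).mpr hfin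
  · -- part (3)
    intro i
    have hr : 0 < r := i.pos
    have hfr1 : r - (i : ℕ) ≤ Module.finrank ℂ ((LoS hA.1 i).map
        (eS : (Fin r → ℂ) →ₗ[ℂ] (Fin r → ℂ))) := by
      rw [LinearEquiv.finrank_map_eq]
      exact finrank_LoS hA.1 i
    obtain ⟨x, hx0, hxW1, hxHiM⟩ := exists_mem_inf _ (HiS hM i)
      (r - (i : ℕ)) ((i : ℕ) + 1) hfr1 (finrank_HiS hM i)
      (by have hi := i.isLt; omega)
    obtain ⟨y, hyLoA, hyx⟩ := Submodule.mem_map.mp hxW1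
    have hyx' : S *ᵥ y = x := hyx
    have hy0 : y ≠ 0 := by
      intro h0
      apply hx0
      rw [← hyx', h0, Matrix.mulVec_zero]
    rw [← hyx'] at hxHiM
    have hN : 0 < ∑ l, ‖co hA.1 y l‖ ^ 2 := sum_co_pos hA.1 hy0
    have hchain : (ithLargest hM.eigenvalues i
            * ithLargest hB.1.eigenvalues ⟨r - 1, by omega⟩)
          * ∑ l, ‖co hA.1 y l‖ ^ 2
        ≤ ithLargest hA.1.eigenvalues i * ∑ l, ‖co hA.1 y l‖ ^ 2 := by
      calc (ithLargest hM.eigenvalues i * ithLargest hB.1.eigenvalues ⟨r - 1, by omega⟩)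
            * ∑ l, ‖co hA.1 y l‖ ^ 2
          = ithLargest hM.eigenvalues i
              * (ithLargest hB.1.eigenvalues ⟨r - 1, by omega⟩ * ∑ l, ‖co hB.1 y l‖ ^ 2) := by
            rw [hNAB y]; ring
        _ ≤ ithLargest hM.eigenvalues i
              * (∑ l, hB.1.eigenvalues l * ‖co hB.1 y l‖ ^ 2) :=
            mul_le_mul_of_nonneg_left (glob_lo_bound hB.1 hr y) (ithLargest_pos hMpd i).le
        _ = ithLargest hM.eigenvalues i * ∑ l, ‖co hM (S *ᵥ y) l‖ ^ 2 := by rw [hNMB y]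
        _ ≤ ∑ l, hM.eigenvalues l * ‖co hM (S *ᵥ y) l‖ ^ 2 := hi_bound hM i hxHiM
        _ = ∑ l, hA.1.eigenvalues l * ‖co hA.1 y l‖ ^ 2 := haMA y
        _ ≤ ithLargest hA.1.eigenvalues i * ∑ l, ‖co hA.1 y l‖ ^ 2 := lo_bound hA.1 i hyLoA
    have hfin := le_of_mul_le_mul_right hchain hN
    exact (le_div_iff₀ (ithLargest_pos hB ⟨r - 1, by omega⟩)).mpr hfin
end

section
/- For positive reals λ_i ≥ 1 (i = 1,...,r) and any choice of positive quantization variances σ_i > 0, the quantity max( Σ_i log₂(λ_i(σ_i+1)/(σ_i+λ_i)), Σ_i log₂((σ_i+1)/σ_i) ) is minimized, term by term, by the choice σ_i = λ_i/(λ_i−1) when λ_i > 1 (and σ_i → ∞ when λ_i = 1), yielding the per-term bound max(log₂(λ_i(σ_i+1)/(σ_i+λ_i)), log₂((σ_i+1)/σ_i)) = log₂(2 − 1/λ_i) ≤ 1. -/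
open Real Filter

/-- Per-term optimization in the constant-gap proof: for `λ > 1` the choice
`σ = λ/(λ−1)` minimizes `max(log₂(λ(σ+1)/(σ+λ)), log₂((σ+1)/σ))` over `σ > 0`,
with optimal value `log₂(2 − 1/λ) ≤ 1`; and for `λ = 1` the value tends to
`log₂(2 − 1/λ) = 0` as `σ → ∞`. -/
theorem constant_gap_per_term_optimization :
    (∀ lam : ℝ, 1 < lam →
      ∀ σStar : ℝ, σStar = lam / (lam - 1) →
        (0 < σStar ∧
         max (logb 2 (lam * (σStar + 1) / (σStar + lam)))
             (logb 2 ((σStar + 1) / σStar)) = logb 2 (2 - 1 / lam) ∧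
         logb 2 (2 - 1 / lam) ≤ 1 ∧
         ∀ σ : ℝ, 0 < σ →
           logb 2 (2 - 1 / lam) ≤
             max (logb 2 (lam * (σ + 1) / (σ + lam)))
                 (logb 2 ((σ + 1) / σ)))) ∧
    (∀ lam : ℝ, lam = 1 →
      Tendsto (fun σ : ℝ =>
          max (logb 2 (lam * (σ + 1) / (σ + lam)))
              (logb 2 ((σ + 1) / σ)))
        atTop (nhds (logb 2 (2 - 1 / lam)))) := by
  constructor
  · intro lam hlam σStar hσ
    have hlam0 : (0:ℝ) < lam := by linarith
    have hlam1 : (0:ℝ) < lam - 1 := by linarith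
    have hσpos : 0 < σStar := by
      rw [hσ]; positivity
    have hval : (2 : ℝ) - 1 / lam = (σStar + 1) / σStar := by
      rw [hσ]; field_simp; ring
    have hval2 : lam * (σStar + 1) / (σStar + lam) = 2 - 1 / lam := by
      rw [hσ]; field_simp; ring
    have hpos2 : (0:ℝ) < 2 - 1 / lam := by
      have : 1 / lam < 1 := by
        rw [div_lt_one hlam0]; linarith
      linarith
    refine ⟨hσpos, ?_, ?_, ?_⟩
    · rw [hval2, ← hval, max_self]
    · have : (2 : ℝ) - 1 / lam ≤ 2 := by
        have : 0 < 1 / lam := by positivity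
        linarith
      calc logb 2 (2 - 1/lam) ≤ logb 2 2 :=
            logb_le_logb_of_le (by norm_num) hpos2 this
        _ = 1 := logb_self_eq_one (by norm_num)
    · intro σ hσ0
      rcases le_total σ σStar with h | h
      · refine le_trans ?_ (le_max_right _ _)
        apply logb_le_logb_of_le (by norm_num) hpos2
        rw [hval]
        rw [div_le_div_iff₀ hσpos hσ0]
        nlinarith
      · refine le_trans ?_ (le_max_left _ _)
        apply logb_le_logb_of_le (by norm_num) hpos2
        rw [← hval2, hσ]
        have hd1 : 0 < σStar + lam := by linarith
        have hd2 : 0 < σ + lam := by linarith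
        rw [← hσ]
        rw [div_le_div_iff₀ hd1 hd2]
        nlinarith [mul_nonneg (mul_nonneg hlam0.le (sub_nonneg.2 h)) hlam1.le]
  · intro lam hlam
    subst hlam
    have hlim : Tendsto (fun σ : ℝ => logb 2 ((σ + 1) / σ)) atTop (nhds 0) := by
      have h1 : Tendsto (fun σ : ℝ => (σ + 1) / σ) atTop (nhds 1) := by
        have : Tendsto (fun σ : ℝ => 1 + σ⁻¹) atTop (nhds 1) := by
          have := (tendsto_const_nhds (x := (1:ℝ)) (f := atTop)).add tendsto_inv_atTop_zero
          simpa using this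
        apply this.congr'
        filter_upwards [eventually_gt_atTop 0] with σ hσ
        field_simp
      have h2 : Tendsto (logb 2) (nhds 1) (nhds 0) := by
        have := (Real.continuousAt_log (by norm_num : (1:ℝ) ≠ 0)).div_const (Real.log 2)
        have h3 := this.tendsto; simp only [Real.log_one, zero_div] at h3; exact h3
      exact h2.comp h1
    have heq : (fun σ : ℝ =>
          max (logb 2 (1 * (σ + 1) / (σ + 1)))
              (logb 2 ((σ + 1) / σ))) =ᶠ[atTop]
        (fun σ : ℝ => logb 2 ((σ + 1) / σ)) := by
      filter_upwards [eventually_gt_atTop 0] with σ hσ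
      have h1 : (1:ℝ) * (σ + 1) / (σ + 1) = 1 := by
        rw [one_mul, div_self (by linarith)]
      rw [h1, Real.logb_one]
      have : (1:ℝ) ≤ (σ + 1) / σ := by
        rw [le_div_iff₀ hσ]; linarith
      have hlog : 0 ≤ logb 2 ((σ + 1) / σ) :=
        Real.logb_nonneg (by norm_num) this
      exact max_eq_right hlog
    have : (2:ℝ) - 1/1 = 1 := by norm_num
    rw [this, Real.logb_one]
    exact hlim.congr' heq.symm
end

section
/- For μ ∈ (0,1), fixed positive definite matrices A ⪰ B ≻ 0 (A = S_{Y_R|Y_D}, B = S_{Y_R|Y_D,X}), the function g(Q) = (1−μ)·log det(A + Q) + μ·log det(Q) − log det(B + Q), over Hermitian positive definite Q, when restricted via the change of variables Q̂ = CᴴQC (with C simultaneously diagonalizing: CᴴBC = I, CᴴAC = Λ diagonal), is maximized by a diagonal Q̂; i.e., restricting Q̂ to be diagonal incurs no loss of optimality. -/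
open Matrix ComplexOrder Real

namespace DiagNoLossAux

variable {n : ℕ}

lemma dot_single {M : Matrix (Fin n) (Fin n) ℂ} (i : Fin n) :
    star (Pi.single i 1) ⬝ᵥ (M *ᵥ (Pi.single i 1 : Fin n → ℂ)) = M i i := by
  classical
  simp [dotProduct, Matrix.mulVec, Pi.single_apply, Pi.star_apply,
    apply_ite, mul_ite, ite_mul, Finset.sum_ite_eq, Finset.sum_ite_eq']

lemma diag_pos {M : Matrix (Fin n) (Fin n) ℂ} (hM : M.PosDef) (i : Fin n) :
    0 < M i i := by
  have h := hM.dotProduct_mulVec_pos (x := (Pi.single i 1 : Fin n → ℂ)) (by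
    intro h
    have := congrFun h i
    simp [Pi.single_apply] at this)
  rwa [dot_single] at h

lemma diag_nonneg {M : Matrix (Fin n) (Fin n) ℂ} (hM : M.PosSemidef) (i : Fin n) :
    0 ≤ M i i := by
  have h := hM.dotProduct_mulVec_nonneg (Pi.single i 1)
  rwa [dot_single] at h

lemma diag_re_pos {M : Matrix (Fin n) (Fin n) ℂ} (hM : M.PosDef) (i : Fin n) :
    0 < (M i i).re := ((Complex.lt_def).mp (diag_pos hM i)).1

lemma diag_eq_re {M : Matrix (Fin n) (Fin n) ℂ} (hM : M.IsHermitian) (i : Fin n) :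
    M i i = ((M i i).re : ℂ) := by
  have h : star (M i i) = M i i := by
    conv_rhs => rw [← hM]
    simp [Matrix.conjTranspose_apply]
  apply Complex.ext
  · simp
  · have := congrArg Complex.im h
    simp at this
    simp
    linarith

lemma det_re_pos {M : Matrix (Fin n) (Fin n) ℂ} (hM : M.PosDef) : 0 < M.det.re :=
  ((Complex.lt_def).mp hM.det_pos).1

lemma det_eq_re {M : Matrix (Fin n) (Fin n) ℂ} (hM : M.PosDef) :
    M.det = (M.det.re : ℂ) := by
  have h := (Complex.lt_def).mp hM.det_pos
  apply Complex.ext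
  · simp
  · simp [← h.2]

lemma posDef_conj {M C : Matrix (Fin n) (Fin n) ℂ} (hM : M.PosDef) (hC : IsUnit C) :
    (Cᴴ * M * C).PosDef := by
  refine Matrix.PosDef.of_dotProduct_mulVec_pos (Matrix.isHermitian_conjTranspose_mul_mul C hM.1) fun x hx => ?_
  have hCx : C *ᵥ x ≠ 0 := by
    intro h
    apply hx
    have hinj := (Matrix.mulVec_injective_iff_isUnit (K := ℂ)).mpr hC
    exact hinj (by simpa using h)
  have h := hM.dotProduct_mulVec_pos hCx
  simpa only [star_mulVec, dotProduct_mulVec, vecMul_vecMul] using h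

/-- Sum of eigenvalues equals the trace. -/
lemma sum_eigenvalues_eq {M : Matrix (Fin n) (Fin n) ℂ} (hM : M.IsHermitian) :
    ((∑ i, hM.eigenvalues i : ℝ) : ℂ) = M.trace := by
  rw [hM.trace_eq_sum_eigenvalues]
  push_cast
  rfl

/-- Hadamard's determinant inequality for positive definite complex matrices. -/
lemma hadamard {M : Matrix (Fin n) (Fin n) ℂ} (hM : M.PosDef) :
    M.det.re ≤ ∏ i, (M i i).re := by
  classical
  rcases Nat.eq_zero_or_pos n with h0 | hn
  · subst h0
    simp [Matrix.det_isEmpty]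
  set t : Fin n → ℝ := fun i => (M i i).re with ht
  have htpos : ∀ i, 0 < t i := fun i => diag_re_pos hM i
  set a : Fin n → ℝ := fun i => (Real.sqrt (t i))⁻¹ with ha
  have hapos : ∀ i, 0 < a i := fun i => inv_pos.mpr (Real.sqrt_pos.mpr (htpos i))
  set D : Matrix (Fin n) (Fin n) ℂ := Matrix.diagonal (fun i => (a i : ℂ)) with hD
  have hDu : IsUnit D := by
    rw [Matrix.isUnit_iff_isUnit_det, hD, Matrix.det_diagonal]
    refine (Finset.prod_ne_zero_iff.mpr fun i _ => ?_).isUnit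
    exact_mod_cast (hapos i).ne'
  have hDH : Dᴴ = D := by
    rw [hD, Matrix.diagonal_conjTranspose]
    have hstar : (star fun i => ((a i : ℝ) : ℂ)) = fun i => ((a i : ℝ) : ℂ) :=
      funext fun i => Complex.conj_ofReal _
    rw [hstar]
  set N := Dᴴ * M * D with hN
  have hNpd : N.PosDef := posDef_conj hM hDu
  have hNdiag : ∀ i, N i i = 1 := by
    intro i
    rw [hN, hDH, hD]
    rw [Matrix.mul_diagonal, Matrix.diagonal_mul]
    rw [diag_eq_re hM.1 i]
    have hsne : Real.sqrt (t i) ≠ 0 := (Real.sqrt_pos.mpr (htpos i)).ne'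
    have hss : Real.sqrt (t i) * Real.sqrt (t i) = t i := Real.mul_self_sqrt (htpos i).le
    have h1 : a i * (M i i).re * a i = 1 := by
      show (Real.sqrt (t i))⁻¹ * (M i i).re * (Real.sqrt (t i))⁻¹ = 1
      have : (M i i).re = t i := rfl
      rw [this, ← hss]
      field_simp
      rw [Real.sqrt_sq (Real.sqrt_nonneg _)]
    calc (↑(a i) : ℂ) * ↑(M i i).re * ↑(a i) = ((a i * (M i i).re * a i : ℝ) : ℂ) := by
          push_cast; ring
      _ = 1 := by rw [h1]; simp
  -- eigenvalues of N
  have hev := hNpd.1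
  have hevpos : ∀ i, 0 < hev.eigenvalues i := fun i => hNpd.eigenvalues_pos i
  have htr : (∑ i, hev.eigenvalues i) = n := by
    have h1 : N.trace = (n : ℂ) := by
      rw [Matrix.trace]
      simp only [Matrix.diag]
      rw [Finset.sum_congr rfl (fun i _ => hNdiag i)]
      simp
    have := sum_eigenvalues_eq hev
    rw [h1] at this
    exact_mod_cast this
  -- AM-GM
  have hprodle : (∏ i, hev.eigenvalues i) ≤ 1 := by
    have hw : ∀ i ∈ Finset.univ (α := Fin n), (0:ℝ) ≤ (n:ℝ)⁻¹ := fun i _ => by positivity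
    have hw' : ∑ _i : Fin n, (n:ℝ)⁻¹ = 1 := by
      rw [Finset.sum_const, Finset.card_univ, Fintype.card_fin, nsmul_eq_mul]
      field_simp
    have hz : ∀ i ∈ Finset.univ (α := Fin n), (0:ℝ) ≤ hev.eigenvalues i :=
      fun i _ => (hevpos i).le
    have h := Real.geom_mean_le_arith_mean_weighted Finset.univ
      (fun _ => (n:ℝ)⁻¹) (fun i => hev.eigenvalues i) hw hw' hz
    have hsum : ∑ i, (n:ℝ)⁻¹ * hev.eigenvalues i = 1 := by
      rw [← Finset.mul_sum, htr]
      field_simp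
    rw [hsum] at h
    have hprw : ∏ i, hev.eigenvalues i ^ ((n:ℝ)⁻¹) =
        (∏ i, hev.eigenvalues i) ^ ((n:ℝ)⁻¹) :=
      Real.finset_prod_rpow Finset.univ _ (fun i _ => (hevpos i).le) _
    rw [hprw] at h
    have hP : (0:ℝ) ≤ ∏ i, hev.eigenvalues i :=
      Finset.prod_nonneg fun i _ => (hevpos i).le
    have := pow_le_pow_left₀ (Real.rpow_nonneg hP _) h n
    rwa [one_pow, ← Real.rpow_natCast ((∏ i, hev.eigenvalues i) ^ ((n:ℝ)⁻¹)) n,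
      ← Real.rpow_mul hP, inv_mul_cancel₀ (by exact_mod_cast hn.ne' : (n:ℝ) ≠ 0),
      Real.rpow_one] at this
  -- relate determinants
  have hdetN : N.det = ((∏ i, hev.eigenvalues i : ℝ) : ℂ) := by
    rw [hev.det_eq_prod_eigenvalues]
    push_cast
    rfl
  have hdetD : D.det = ((∏ i, a i : ℝ) : ℂ) := by
    rw [hD, Matrix.det_diagonal]
    push_cast
    rfl
  have hdetmul : N.det = M.det * ((∏ i, a i : ℝ)^2 : ℝ) := by
    rw [hN, Matrix.det_mul, Matrix.det_mul, hDH, hdetD]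
    push_cast
    ring
  obtain ⟨x, hx0, hxeq⟩ : ∃ x : ℝ, 0 < x ∧ M.det = (x:ℂ) :=
    ⟨M.det.re, det_re_pos hM, det_eq_re hM⟩
  have key : (∏ i, hev.eigenvalues i) = x * (∏ i, a i)^2 := by
    have h2 : ((∏ i, hev.eigenvalues i : ℝ) : ℂ) = ((x * (∏ i, a i)^2 : ℝ) : ℂ) := by
      rw [← hdetN, hdetmul, hxeq]
      push_cast
      ring
    exact_mod_cast h2
  have hsq : (∏ i, a i)^2 = (∏ i, t i)⁻¹ := by
    rw [← Finset.prod_pow, ← Finset.prod_inv_distrib]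
    refine Finset.prod_congr rfl fun i _ => ?_
    show ((Real.sqrt (t i))⁻¹)^2 = (t i)⁻¹
    rw [inv_pow, Real.sq_sqrt (htpos i).le]
  have htprod : (0:ℝ) < ∏ i, t i := Finset.prod_pos fun i _ => htpos i
  have hxre : M.det.re = x := by rw [hxeq, Complex.ofReal_re]
  rw [hxre]
  have hxval : x = (∏ i, hev.eigenvalues i) * ∏ i, t i := by
    rw [key, hsq]
    field_simp
  rw [hxval]
  calc (∏ i, hev.eigenvalues i) * ∏ i, t i ≤ 1 * ∏ i, t i :=
        mul_le_mul_of_nonneg_right hprodle htprod.le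
    _ = ∏ i, t i := one_mul _

end DiagNoLossAux

open DiagNoLossAux in
/-- Restricting the transformed quantization covariance `Q̂ = CᴴQC` to be
diagonal incurs no loss of optimality in maximizing the Lagrangian
`g(Q) = (1−μ)·log det(A+Q) + μ·log det Q − log det(B+Q)` over Hermitian
positive definite `Q`, where `C` simultaneously diagonalizes `B` to `I` and
`A` to a diagonal `Λ`. -/
theorem diagonal_quantization_no_loss
    (r : ℕ) (μ : ℝ) (hμ : μ ∈ Set.Ioo (0:ℝ) 1)
    (A B C : Matrix (Fin r) (Fin r) ℂ) (lam : Fin r → ℝ)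
    (hA : A.PosDef) (hB : B.PosDef) (hAB : (A - B).PosSemidef)
    (hC : IsUnit C) (hCB : Cᴴ * B * C = 1)
    (hCA : Cᴴ * A * C = Matrix.diagonal (fun i => (lam i : ℂ)))
    (g : Matrix (Fin r) (Fin r) ℂ → ℝ)
    (hg : g = fun Q => (1 - μ) * Real.log ((A + Q).det.re)
        + μ * Real.log (Q.det.re) - Real.log ((B + Q).det.re)) :
    ∀ Q : Matrix (Fin r) (Fin r) ℂ, Q.PosDef →
      ∃ dvec : Fin r → ℝ, (∀ i, 0 < dvec i) ∧
        g Q ≤ g ((C⁻¹)ᴴ * Matrix.diagonal (fun i => (dvec i : ℂ)) * C⁻¹) := by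
  obtain ⟨hμ0, hμ1⟩ := hμ
  intro Q hQ
  classical
  have hμ1' : (0:ℝ) ≤ 1 - μ := by linarith
  have hCdU : IsUnit C.det := (Matrix.isUnit_iff_isUnit_det C).mp hC
  have hCdet : C.det ≠ 0 := hCdU.ne_zero
  have hCinv : C⁻¹ * C = 1 := Matrix.nonsing_inv_mul C hCdU
  have hCinv' : C * C⁻¹ = 1 := Matrix.mul_nonsing_inv C hCdU
  set c : ℝ := Complex.normSq C.det with hc
  have hcpos : 0 < c := Complex.normSq_pos.mpr hCdet
  have hdetconj : ∀ X : Matrix (Fin r) (Fin r) ℂ, (Cᴴ * X * C).det = X.det * (c:ℂ) := by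
    intro X
    calc (Cᴴ * X * C).det = star C.det * X.det * C.det := by
          rw [Matrix.det_mul, Matrix.det_mul, Matrix.det_conjTranspose]
      _ = X.det * (star C.det * C.det) := by ring
      _ = X.det * (c:ℂ) := by
          rw [Complex.star_def, ← Complex.normSq_eq_conj_mul_self, hc]
  have keylog : ∀ X Y : Matrix (Fin r) (Fin r) ℂ, X.PosDef → Y.PosDef →
      Cᴴ * X * C = Y → Real.log X.det.re = Real.log Y.det.re - Real.log c := by
    intro X Y hX hY hXY
    obtain ⟨x, hx0, hxe⟩ : ∃ x:ℝ, 0 < x ∧ X.det = (x:ℂ) :=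
      ⟨_, det_re_pos hX, det_eq_re hX⟩
    obtain ⟨y, hy0, hye⟩ : ∃ y:ℝ, 0 < y ∧ Y.det = (y:ℂ) :=
      ⟨_, det_re_pos hY, det_eq_re hY⟩
    have h1 : Y.det = X.det * (c:ℂ) := by rw [← hXY]; exact hdetconj X
    have h2 : y = x * c := by
      have h3 : (y:ℂ) = ((x * c : ℝ):ℂ) := by rw [← hye, h1, hxe]; push_cast; ring
      exact_mod_cast h3
    rw [hxe, hye]
    simp only [Complex.ofReal_re]
    rw [h2, Real.log_mul hx0.ne' hcpos.ne']
    ring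
  have logmul : ∀ X Y Z : Matrix (Fin r) (Fin r) ℂ, X.PosDef → Y.PosDef → Z.PosDef →
      X.det * Y.det = Z.det →
      Real.log Z.det.re = Real.log X.det.re + Real.log Y.det.re := by
    intro X Y Z hX hY hZ h
    obtain ⟨x, hx0, hxe⟩ : ∃ x:ℝ, 0 < x ∧ X.det = (x:ℂ) :=
      ⟨_, det_re_pos hX, det_eq_re hX⟩
    obtain ⟨y, hy0, hye⟩ : ∃ y:ℝ, 0 < y ∧ Y.det = (y:ℂ) :=
      ⟨_, det_re_pos hY, det_eq_re hY⟩
    obtain ⟨z, hz0, hze⟩ : ∃ z:ℝ, 0 < z ∧ Z.det = (z:ℂ) :=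
      ⟨_, det_re_pos hZ, det_eq_re hZ⟩
    have h2 : z = x * y := by
      have h3 : (z:ℂ) = ((x * y : ℝ):ℂ) := by rw [← hze, ← h, hxe, hye]; push_cast; ring
      exact_mod_cast h3
    rw [hxe, hye, hze]
    simp only [Complex.ofReal_re]
    rw [h2, Real.log_mul hx0.ne' hy0.ne']
  set Λ : Matrix (Fin r) (Fin r) ℂ := Matrix.diagonal (fun i => (lam i : ℂ)) with hΛdef
  set Qh : Matrix (Fin r) (Fin r) ℂ := Cᴴ * Q * C with hQhdef
  have hQhpd : Qh.PosDef := posDef_conj hQ hC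
  have hone : ((1 : Matrix (Fin r) (Fin r) ℂ) + Qh).PosDef :=
    Matrix.PosDef.one.add hQhpd
  have hlam1 : ∀ i, 1 ≤ lam i := by
    intro i
    have hpsd := hAB.conjTranspose_mul_mul_same C
    have heq : Cᴴ * (A - B) * C = Λ - 1 := by
      rw [Matrix.mul_sub, Matrix.sub_mul, hCA, hCB]
    rw [heq] at hpsd
    have h := diag_nonneg hpsd i
    have h2 : (Λ - 1) i i = ((lam i - 1 : ℝ) : ℂ) := by
      rw [Matrix.sub_apply, hΛdef, Matrix.diagonal_apply_eq, Matrix.one_apply_eq]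
      push_cast
      ring
    rw [h2] at h
    have h3 : (0:ℝ) ≤ lam i - 1 := by exact_mod_cast h
    linarith
  have honeU : IsUnit (1 + Qh).det := (Matrix.isUnit_iff_isUnit_det _).mp hone.isUnit
  set P : Matrix (Fin r) (Fin r) ℂ := (1 + Qh)⁻¹ with hPdef
  have hPpd : P.PosDef := hone.inv
  have hmulP : (1 + Qh) * P = 1 := Matrix.mul_nonsing_inv _ honeU
  have hPmul : P * (1 + Qh) = 1 := Matrix.nonsing_inv_mul _ honeU
  have hPQh : P * Qh = 1 - P := by
    have h := hPmul
    rw [Matrix.mul_add, Matrix.mul_one] at h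
    exact eq_sub_of_add_eq' h
  have h1Ppd : ((1 : Matrix (Fin r) (Fin r) ℂ) - P).PosDef := by
    have hQQ : (Qh * Qh).PosSemidef := by
      have h := Matrix.posSemidef_conjTranspose_mul_self Qh
      rwa [hQhpd.1] at h
    have hsum : (Qh + Qh * Qh).PosDef := hQhpd.add_posSemidef hQQ
    have hcong := posDef_conj hsum hPpd.isUnit
    have hPH : Pᴴ = P := hPpd.1
    rw [hPH] at hcong
    have key : P * (Qh + Qh * Qh) * P = 1 - P := by
      have e1 : Qh + Qh * Qh = Qh * (1 + Qh) := by rw [Matrix.mul_add, Matrix.mul_one]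
      rw [e1, ← Matrix.mul_assoc, Matrix.mul_assoc (P * Qh) (1 + Qh) P, hmulP,
        Matrix.mul_one, hPQh]
    rwa [key] at hcong
  have hp0 : ∀ i, 0 < (P i i).re := fun i => diag_re_pos hPpd i
  have hp1 : ∀ i, (P i i).re < 1 := by
    intro i
    have h := diag_re_pos h1Ppd i
    rw [Matrix.sub_apply, Matrix.one_apply_eq] at h
    simp only [Complex.sub_re, Complex.one_re] at h
    linarith
  -- the chosen diagonal values
  refine ⟨fun i => (1 - (P i i).re) / (P i i).re, fun i => div_pos (by linarith [hp1 i]) (hp0 i), ?_⟩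
  set dv : Fin r → ℝ := fun i => (1 - (P i i).re) / (P i i).re with hdvdef
  have hd0 : ∀ i, 0 < dv i := fun i => div_pos (by linarith [hp1 i]) (hp0 i)
  -- the matrix S = diag (sqrt (lam - 1)) and G = S P S
  set S : Matrix (Fin r) (Fin r) ℂ := Matrix.diagonal (fun i => (Real.sqrt (lam i - 1) : ℂ))
    with hSdef
  have hSH : Sᴴ = S := by
    rw [hSdef, Matrix.diagonal_conjTranspose]
    have hstar : (star fun i => ((Real.sqrt (lam i - 1) : ℝ) : ℂ))
        = fun i => ((Real.sqrt (lam i - 1) : ℝ) : ℂ) :=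
      funext fun i => Complex.conj_ofReal _
    rw [hstar]
  have hSS : S * S = Λ - 1 := by
    rw [hSdef, Matrix.diagonal_mul_diagonal, hΛdef, ← Matrix.diagonal_one,
      Matrix.diagonal_sub]
    refine congrArg Matrix.diagonal (funext fun i => ?_)
    have hms : Real.sqrt (lam i - 1) * Real.sqrt (lam i - 1) = lam i - 1 :=
      Real.mul_self_sqrt (by linarith [hlam1 i])
    show ((Real.sqrt (lam i - 1) : ℂ)) * (Real.sqrt (lam i - 1) : ℂ)
        = (lam i : ℂ) - 1
    calc ((Real.sqrt (lam i - 1) : ℂ)) * (Real.sqrt (lam i - 1) : ℂ)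
        = ((Real.sqrt (lam i - 1) * Real.sqrt (lam i - 1) : ℝ) : ℂ) := by push_cast; ring
      _ = ((lam i - 1 : ℝ) : ℂ) := by rw [hms]
      _ = (lam i : ℂ) - 1 := by push_cast; ring
  set G : Matrix (Fin r) (Fin r) ℂ := S * P * S with hGdef
  have hGpsd : G.PosSemidef := by
    have h := hPpd.posSemidef.conjTranspose_mul_mul_same S
    rwa [hSH] at h
  have h1G : ((1 : Matrix (Fin r) (Fin r) ℂ) + G).PosDef :=
    Matrix.PosDef.one.add_posSemidef hGpsd
  have hΛpsd : Λ.PosSemidef := by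
    rw [hΛdef]
    refine Matrix.PosSemidef.diagonal ?_
    intro i
    exact Complex.zero_le_real.mpr (by linarith [hlam1 i])
  have hΛQ : (Λ + Qh).PosDef := Matrix.PosDef.posSemidef_add hΛpsd hQhpd
  -- determinant identities
  have hdet1 : (1 - P).det * (1 + Qh).det = Qh.det := by
    rw [← Matrix.det_mul]
    congr 1
    rw [Matrix.sub_mul, Matrix.one_mul, hPmul]
    exact add_sub_cancel_left 1 Qh
  have hdet2 : (1 + Qh).det * (1 + G).det = (Λ + Qh).det := by
    have hg1 : (1 + G).det = (1 + P * (S * S)).det := by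
      rw [hGdef, Matrix.mul_assoc, Matrix.det_one_add_mul_comm, Matrix.mul_assoc]
    rw [hg1, ← Matrix.det_mul]
    congr 1
    rw [Matrix.mul_add, Matrix.mul_one, ← Matrix.mul_assoc, hmulP, Matrix.one_mul, hSS]
    abel
  -- diagonal entries
  have hGdiag : ∀ i, ((1 + G) i i).re = 1 + (lam i - 1) * (P i i).re := by
    intro i
    rw [Matrix.add_apply, Matrix.one_apply_eq]
    have hms : Real.sqrt (lam i - 1) * Real.sqrt (lam i - 1) = lam i - 1 :=
      Real.mul_self_sqrt (by linarith [hlam1 i])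
    have hGe : G i i = (((lam i - 1) * (P i i).re : ℝ) : ℂ) := by
      rw [hGdef, hSdef, Matrix.mul_diagonal, Matrix.diagonal_mul,
        diag_eq_re hPpd.1 i]
      calc ((Real.sqrt (lam i - 1) : ℂ)) * ((P i i).re : ℂ) * (Real.sqrt (lam i - 1) : ℂ)
          = ((Real.sqrt (lam i - 1) * (P i i).re * Real.sqrt (lam i - 1) : ℝ) : ℂ) := by
            push_cast; ring
        _ = _ := by
            rw [show Real.sqrt (lam i - 1) * (P i i).re * Real.sqrt (lam i - 1)
              = (lam i - 1) * (P i i).re by linear_combination (P i i).re * hms]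
            simp
    rw [hGe]
    simp
  have hPdiag : ∀ i, ((1 - P) i i).re = 1 - (P i i).re := by
    intro i
    rw [Matrix.sub_apply, Matrix.one_apply_eq]
    simp
  -- positivity of scalar factors
  have hf1 : ∀ i, (0:ℝ) < 1 + (lam i - 1) * (P i i).re := by
    intro i
    have := mul_nonneg (by linarith [hlam1 i] : (0:ℝ) ≤ lam i - 1) (hp0 i).le
    linarith
  have hf2 : ∀ i, (0:ℝ) < 1 - (P i i).re := fun i => by linarith [hp1 i]
  -- Hadamard inequalities, in log form
  have l1 : Real.log (1 + G).det.re ≤ ∑ i, Real.log (1 + (lam i - 1) * (P i i).re) := by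
    have e1 : ∏ i, ((1 + G) i i).re = ∏ i, (1 + (lam i - 1) * (P i i).re) :=
      Finset.prod_congr rfl fun i _ => hGdiag i
    calc Real.log (1 + G).det.re ≤ Real.log (∏ i, (1 + (lam i - 1) * (P i i).re)) := by
          refine Real.log_le_log (det_re_pos h1G) ?_
          rw [← e1]
          exact hadamard h1G
      _ = ∑ i, Real.log (1 + (lam i - 1) * (P i i).re) :=
          Real.log_prod fun i _ => (hf1 i).ne'
  have l2 : Real.log (1 - P).det.re ≤ ∑ i, Real.log (1 - (P i i).re) := by
    have e2 : ∏ i, ((1 - P) i i).re = ∏ i, (1 - (P i i).re) :=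
      Finset.prod_congr rfl fun i _ => hPdiag i
    calc Real.log (1 - P).det.re ≤ Real.log (∏ i, (1 - (P i i).re)) := by
          refine Real.log_le_log (det_re_pos h1Ppd) ?_
          rw [← e2]
          exact hadamard h1Ppd
      _ = ∑ i, Real.log (1 - (P i i).re) :=
          Real.log_prod fun i _ => (hf2 i).ne'
  -- value of g at Q
  have heqA : Cᴴ * (A + Q) * C = Λ + Qh := by
    rw [Matrix.mul_add, Matrix.add_mul, hCA]
  have heqB : Cᴴ * (B + Q) * C = 1 + Qh := by
    rw [Matrix.mul_add, Matrix.add_mul, hCB]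
  have gQ1 : g Q = (1-μ) * Real.log (Λ + Qh).det.re + μ * Real.log Qh.det.re
      - Real.log (1 + Qh).det.re := by
    rw [hg]
    dsimp only
    rw [keylog (A + Q) (Λ + Qh) (hA.add hQ) hΛQ heqA,
      keylog Q Qh hQ hQhpd hQhdef.symm,
      keylog (B + Q) (1 + Qh) (hB.add hQ) hone heqB]
    ring
  have gQ2 : g Q = (1-μ) * Real.log (1 + G).det.re + μ * Real.log (1 - P).det.re := by
    rw [gQ1, logmul _ _ _ hone h1G hΛQ hdet2, logmul _ _ _ h1Ppd hone hQhpd hdet1]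
    ring
  -- the transformed candidate
  set Dd : Matrix (Fin r) (Fin r) ℂ := Matrix.diagonal (fun i => (dv i : ℂ)) with hDddef
  have hDdpd : Dd.PosDef := by
    rw [hDddef]
    exact Matrix.PosDef.diagonal fun i => Complex.zero_lt_real.mpr (hd0 i)
  have hCiU : IsUnit (C⁻¹) :=
    (Matrix.isUnit_iff_isUnit_det _).mpr (Matrix.isUnit_nonsing_inv_det C hCdU)
  have hQ'pd : ((C⁻¹)ᴴ * Dd * C⁻¹).PosDef := posDef_conj hDdpd hCiU
  set Q' : Matrix (Fin r) (Fin r) ℂ := (C⁻¹)ᴴ * Dd * C⁻¹ with hQ'def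
  have heqD : Cᴴ * Q' * C = Dd := by
    have e : Cᴴ * (C⁻¹)ᴴ = 1 := by
      rw [← Matrix.conjTranspose_mul, hCinv, Matrix.conjTranspose_one]
    rw [hQ'def]
    calc Cᴴ * ((C⁻¹)ᴴ * Dd * C⁻¹) * C
        = Cᴴ * (C⁻¹)ᴴ * Dd * (C⁻¹ * C) := by
          simp only [Matrix.mul_assoc]
      _ = Dd := by rw [e, hCinv, Matrix.one_mul, Matrix.mul_one]
  have heqAD : Cᴴ * (A + Q') * C = Λ + Dd := by
    rw [Matrix.mul_add, Matrix.add_mul, hCA, heqD]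
  have heqBD : Cᴴ * (B + Q') * C = 1 + Dd := by
    rw [Matrix.mul_add, Matrix.add_mul, hCB, heqD]
  have eΛD : Λ + Dd = Matrix.diagonal (fun i => ((lam i + dv i : ℝ) : ℂ)) := by
    rw [hΛdef, hDddef, Matrix.diagonal_add]
    refine congrArg Matrix.diagonal (funext fun i => ?_)
    show (lam i : ℂ) + (dv i : ℂ) = ((lam i + dv i : ℝ) : ℂ)
    push_cast
    ring
  have e1D : (1 : Matrix (Fin r) (Fin r) ℂ) + Dd
      = Matrix.diagonal (fun i => ((1 + dv i : ℝ) : ℂ)) := by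
    rw [hDddef, ← Matrix.diagonal_one, Matrix.diagonal_add]
    refine congrArg Matrix.diagonal (funext fun i => ?_)
    show (1 : ℂ) + (dv i : ℂ) = ((1 + dv i : ℝ) : ℂ)
    push_cast
    ring
  have hΛD : (Λ + Dd).PosDef := by
    rw [eΛD]
    exact Matrix.PosDef.diagonal fun i =>
      Complex.zero_lt_real.mpr (by linarith [hlam1 i, hd0 i])
  have h1D : ((1 : Matrix (Fin r) (Fin r) ℂ) + Dd).PosDef := by
    rw [e1D]
    exact Matrix.PosDef.diagonal fun i =>
      Complex.zero_lt_real.mpr (by linarith [hd0 i])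
  have detdiag : ∀ f : Fin r → ℝ, (Matrix.diagonal (fun i => (f i : ℂ))).det.re = ∏ i, f i := by
    intro f
    rw [Matrix.det_diagonal, ← Complex.ofReal_prod, Complex.ofReal_re]
  have gQ'1 : g Q' = (1-μ) * Real.log (Λ + Dd).det.re + μ * Real.log Dd.det.re
      - Real.log (1 + Dd).det.re := by
    rw [hg]
    dsimp only
    rw [keylog (A + Q') (Λ + Dd) (hA.add hQ'pd) hΛD heqAD,
      keylog Q' Dd hQ'pd hDdpd heqD,
      keylog (B + Q') (1 + Dd) (hB.add hQ'pd) h1D heqBD]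
    ring
  have gQ'2 : g Q' = (1-μ) * (∑ i, Real.log (lam i + dv i))
      + μ * (∑ i, Real.log (dv i)) - (∑ i, Real.log (1 + dv i)) := by
    rw [gQ'1, eΛD, e1D, hDddef, detdiag, detdiag, detdiag,
      Real.log_prod (fun i _ => (by linarith [hlam1 i, hd0 i] : (0:ℝ) < lam i + dv i).ne'),
      Real.log_prod (fun i _ => (hd0 i).ne'),
      Real.log_prod (fun i _ => (by linarith [hd0 i] : (0:ℝ) < 1 + dv i).ne')]
  -- scalar identity per coordinate
  have scalar : ∀ i, (1-μ) * Real.log (1 + (lam i - 1) * (P i i).re)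
      + μ * Real.log (1 - (P i i).re)
      = (1-μ) * Real.log (lam i + dv i) + μ * Real.log (dv i) - Real.log (1 + dv i) := by
    intro i
    have hpne : (P i i).re ≠ 0 := (hp0 i).ne'
    have e1 : lam i + dv i = (1 + (lam i - 1) * (P i i).re) / (P i i).re := by
      rw [hdvdef]
      field_simp
      ring
    have e2 : (1:ℝ) + dv i = 1 / (P i i).re := by
      rw [hdvdef]
      field_simp
      ring
    have e3 : dv i = (1 - (P i i).re) / (P i i).re := rfl
    rw [e1, e2, e3, Real.log_div (hf1 i).ne' hpne, Real.log_div (hf2 i).ne' hpne,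
      Real.log_div one_ne_zero hpne, Real.log_one]
    ring
  -- put everything together
  calc g Q = (1-μ) * Real.log (1 + G).det.re + μ * Real.log (1 - P).det.re := gQ2
    _ ≤ (1-μ) * (∑ i, Real.log (1 + (lam i - 1) * (P i i).re))
        + μ * (∑ i, Real.log (1 - (P i i).re)) :=
      add_le_add (mul_le_mul_of_nonneg_left l1 hμ1') (mul_le_mul_of_nonneg_left l2 hμ0.le)
    _ = ∑ i, ((1-μ) * Real.log (1 + (lam i - 1) * (P i i).re)
        + μ * Real.log (1 - (P i i).re)) := by
      rw [Finset.mul_sum, Finset.mul_sum, ← Finset.sum_add_distrib]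
    _ = ∑ i, ((1-μ) * Real.log (lam i + dv i) + μ * Real.log (dv i)
        - Real.log (1 + dv i)) := Finset.sum_congr rfl fun i _ => scalar i
    _ = (1-μ) * (∑ i, Real.log (lam i + dv i)) + μ * (∑ i, Real.log (dv i))
        - (∑ i, Real.log (1 + dv i)) := by
      rw [Finset.sum_sub_distrib, Finset.sum_add_distrib, Finset.mul_sum, Finset.mul_sum]
    _ = g Q' := gQ'2.symm
end

section
/- Let S_X, S_{X_T} be positive definite, H_{SD} ∈ ℂ^{d×s}, H_{TD} ∈ ℂ^{d×t}, H_{SR} ∈ ℂ^{r×s}, H_{TR} ∈ ℂ^{r×t} generic (full-rank concatenations). Define Ȳ_R = H_{SR}X + H_{TR}X_T and Ȳ_D = H_{SD}X + H_{TD}X_T for independent Gaussian X ~ N(0, S_X), X_T ~ N(0, S_{X_T}). Then rank(S_{Ȳ_R|Ȳ_D}) = min(r, (s + t − d)⁺) almost surely. -/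
open Matrix ComplexOrder

section AuxRank

variable {m m₁ m₂ n n₁ n₂ : Type*} [Fintype m] [Fintype m₁] [Fintype m₂]
  [Fintype n] [Fintype n₁] [Fintype n₂]
  [DecidableEq m] [DecidableEq m₁] [DecidableEq m₂]
  [DecidableEq n] [DecidableEq n₁] [DecidableEq n₂]

set_option linter.unusedSectionVars false

lemma myrank_fromRows_zero_right (X : Matrix m₁ n ℂ) :
    (fromRows X (0 : Matrix m₂ n ℂ)).rank = X.rank := by
  refine le_antisymm ?_ ?_
  · have h : fromRows X (0 : Matrix m₂ n ℂ)
        = fromRows (1 : Matrix m₁ m₁ ℂ) (0 : Matrix m₂ m₁ ℂ) * X := by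
      rw [fromRows_mul]; simp
    rw [h]; exact rank_mul_le_right _ _
  · have h : X = fromCols (1 : Matrix m₁ m₁ ℂ) (0 : Matrix m₁ m₂ ℂ) *
        fromRows X (0 : Matrix m₂ n ℂ) := by
      rw [fromCols_mul_fromRows]; simp
    conv_lhs => rw [h]
    exact rank_mul_le_right _ _

lemma myrank_fromRows_zero_left (X : Matrix m₂ n ℂ) :
    (fromRows (0 : Matrix m₁ n ℂ) X).rank = X.rank := by
  refine le_antisymm ?_ ?_
  · have h : fromRows (0 : Matrix m₁ n ℂ) X
        = fromRows (0 : Matrix m₁ m₂ ℂ) (1 : Matrix m₂ m₂ ℂ) * X := by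
      rw [fromRows_mul]; simp
    rw [h]; exact rank_mul_le_right _ _
  · have h : X = fromCols (0 : Matrix m₂ m₁ ℂ) (1 : Matrix m₂ m₂ ℂ) *
        fromRows (0 : Matrix m₁ n ℂ) X := by
      rw [fromCols_mul_fromRows]; simp
    conv_lhs => rw [h]
    exact rank_mul_le_right _ _

lemma myrank_fromCols_zero_right (X : Matrix m n₁ ℂ) :
    (fromCols X (0 : Matrix m n₂ ℂ)).rank = X.rank := by
  refine le_antisymm ?_ ?_
  · have h : fromCols X (0 : Matrix m n₂ ℂ)
        = X * fromCols (1 : Matrix n₁ n₁ ℂ) (0 : Matrix n₁ n₂ ℂ) := by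
      rw [mul_fromCols]; simp
    rw [h]; exact rank_mul_le_left _ _
  · have h : X = fromCols X (0 : Matrix m n₂ ℂ) *
        fromRows (1 : Matrix n₁ n₁ ℂ) (0 : Matrix n₂ n₁ ℂ) := by
      rw [fromCols_mul_fromRows]; simp
    conv_lhs => rw [h]
    exact rank_mul_le_left _ _

lemma myrank_fromCols_zero_left (X : Matrix m n₂ ℂ) :
    (fromCols (0 : Matrix m n₁ ℂ) X).rank = X.rank := by
  refine le_antisymm ?_ ?_
  · have h : fromCols (0 : Matrix m n₁ ℂ) X
        = X * fromCols (0 : Matrix n₂ n₁ ℂ) (1 : Matrix n₂ n₂ ℂ) := by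
      rw [mul_fromCols]; simp
    rw [h]; exact rank_mul_le_left _ _
  · have h : X = fromCols (0 : Matrix m n₁ ℂ) X *
        fromRows (0 : Matrix n₁ n₂ ℂ) (1 : Matrix n₂ n₂ ℂ) := by
      rw [fromCols_mul_fromRows]; simp
    conv_lhs => rw [h]
    exact rank_mul_le_left _ _

lemma myrank_fromBlocks_A (A : Matrix m₁ n₁ ℂ) :
    (fromBlocks A 0 0 (0 : Matrix m₂ n₂ ℂ)).rank = A.rank := by
  rw [← fromRows_fromCols_eq_fromBlocks]
  rw [show fromCols (0 : Matrix m₂ n₁ ℂ) (0 : Matrix m₂ n₂ ℂ) = 0 from fromCols_zero]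
  rw [myrank_fromRows_zero_right, myrank_fromCols_zero_right]

lemma myrank_fromBlocks_B (B : Matrix m₂ n₂ ℂ) :
    (fromBlocks (0 : Matrix m₁ n₁ ℂ) 0 0 B).rank = B.rank := by
  rw [← fromRows_fromCols_eq_fromBlocks]
  rw [show fromCols (0 : Matrix m₁ n₁ ℂ) (0 : Matrix m₁ n₂ ℂ) = 0 from fromCols_zero]
  rw [myrank_fromRows_zero_left, myrank_fromCols_zero_left]

lemma myrank_fromBlocks_diag (A : Matrix m₁ n₁ ℂ) (B : Matrix m₂ n₂ ℂ) :
    (fromBlocks A 0 0 B).rank = A.rank + B.rank := by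
  classical
  set M : Matrix (m₁ ⊕ m₂) (n₁ ⊕ n₂) ℂ := fromBlocks A 0 0 B with hM
  set M₁ : Matrix (m₁ ⊕ m₂) (n₁ ⊕ n₂) ℂ := fromBlocks A 0 0 0 with hM₁
  set M₂ : Matrix (m₁ ⊕ m₂) (n₁ ⊕ n₂) ℂ := fromBlocks 0 0 0 B with hM₂
  have hadd : M = M₁ + M₂ := by
    rw [hM, hM₁, hM₂, fromBlocks_add]; simp
  have hfac₁ : M₁ = M * fromBlocks (1 : Matrix n₁ n₁ ℂ) 0 0 (0 : Matrix n₂ n₂ ℂ) := by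
    rw [hM, hM₁, fromBlocks_multiply]; simp
  have hfac₂ : M₂ = M * fromBlocks (0 : Matrix n₁ n₁ ℂ) 0 0 (1 : Matrix n₂ n₂ ℂ) := by
    rw [hM, hM₂, fromBlocks_multiply]; simp
  have hsup : LinearMap.range M.mulVecLin
      = LinearMap.range M₁.mulVecLin ⊔ LinearMap.range M₂.mulVecLin := by
    refine le_antisymm ?_ (sup_le ?_ ?_)
    · rintro v ⟨x, rfl⟩
      rw [Matrix.mulVecLin_apply]
      refine Submodule.mem_sup.2 ⟨M₁ *ᵥ x, ⟨x, rfl⟩, M₂ *ᵥ x, ⟨x, rfl⟩, ?_⟩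
      rw [hadd, Matrix.add_mulVec]
    · rw [hfac₁, Matrix.mulVecLin_mul]; exact LinearMap.range_comp_le_range _ _
    · rw [hfac₂, Matrix.mulVecLin_mul]; exact LinearMap.range_comp_le_range _ _
  have hzero₁ : ∀ (x : n₁ ⊕ n₂ → ℂ) (j : m₂), (M₁ *ᵥ x) (Sum.inr j) = 0 := by
    intro x j
    simp [hM₁, Matrix.mulVec, dotProduct, Matrix.fromBlocks, Fintype.sum_sum_type]
  have hzero₂ : ∀ (x : n₁ ⊕ n₂ → ℂ) (i : m₁), (M₂ *ᵥ x) (Sum.inl i) = 0 := by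
    intro x i
    simp [hM₂, Matrix.mulVec, dotProduct, Matrix.fromBlocks, Fintype.sum_sum_type]
  have hinf : LinearMap.range M₁.mulVecLin ⊓ LinearMap.range M₂.mulVecLin = ⊥ := by
    rw [eq_bot_iff]
    rintro v ⟨⟨x, hx⟩, ⟨y, hy⟩⟩
    have : v = 0 := by
      funext i
      cases i with
      | inl i => rw [← hy, Matrix.mulVecLin_apply]; exact hzero₂ y i
      | inr j => rw [← hx, Matrix.mulVecLin_apply]; exact hzero₁ x j
    simp [this]
  have hfin := Submodule.finrank_sup_add_finrank_inf_eq
    (LinearMap.range M₁.mulVecLin) (LinearMap.range M₂.mulVecLin)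
  rw [hinf, finrank_bot, add_zero] at hfin
  have h1 : M₁.rank = A.rank := myrank_fromBlocks_A A
  have h2 : M₂.rank = B.rank := myrank_fromBlocks_B B
  rw [← h1, ← h2]
  unfold Matrix.rank
  rw [hsup, hfin]

/-- If `C P C = C` for `C = D * Dᴴ`, then `C P D = D`. -/
lemma my_cpd_eq (D : Matrix m n ℂ) (P : Matrix m m ℂ)
    (h1 : (D * Dᴴ) * P * (D * Dᴴ) = D * Dᴴ) :
    (D * Dᴴ) * P * D = D := by
  have hE : D - (D * Dᴴ) * P * D = (1 - (D * Dᴴ) * P) * D := by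
    rw [Matrix.sub_mul, Matrix.one_mul]
  have h0 : (1 - (D * Dᴴ) * P) * (D * Dᴴ) = 0 := by
    rw [Matrix.sub_mul, Matrix.one_mul, h1, sub_self]
  have hEE : (D - (D * Dᴴ) * P * D) * (D - (D * Dᴴ) * P * D)ᴴ = 0 := by
    rw [hE, conjTranspose_mul]
    calc ((1 - (D * Dᴴ) * P) * D) * (Dᴴ * (1 - (D * Dᴴ) * P)ᴴ)
        = ((1 - (D * Dᴴ) * P) * (D * Dᴴ)) * (1 - (D * Dᴴ) * P)ᴴ := by
          simp only [Matrix.mul_assoc]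
      _ = 0 := by rw [h0, Matrix.zero_mul]
  exact (sub_eq_zero.mp (Matrix.self_mul_conjTranspose_eq_zero.mp hEE)).symm

end AuxRank

namespace Matrix.PosSemidef
open scoped MatrixOrder

/-- Square root of a positive semidefinite matrix. -/
noncomputable def sqrt {n : Type*} [Fintype n] [DecidableEq n] {A : Matrix n n ℂ}
    (_ : A.PosSemidef) : Matrix n n ℂ := CFC.sqrt A

lemma sqrt_mul_self {n : Type*} [Fintype n] [DecidableEq n] {A : Matrix n n ℂ}
    (hA : A.PosSemidef) : hA.sqrt * hA.sqrt = A :=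
  CFC.sqrt_mul_sqrt_self A hA.nonneg

lemma posSemidef_sqrt {n : Type*} [Fintype n] [DecidableEq n] {A : Matrix n n ℂ}
    (hA : A.PosSemidef) : hA.sqrt.PosSemidef :=
  Matrix.nonneg_iff_posSemidef.mp (CFC.sqrt_nonneg A)

end Matrix.PosSemidef

/-- For noiseless observations `Ȳ_R = H_SR X + H_TR X_T`,
`Ȳ_D = H_SD X + H_TD X_T` with independent Gaussian inputs of positive
definite covariances `S_X, S_{X_T}`, and generic (full-rank concatenation)
channel matrices, the conditional covariance
`S_{Ȳ_R|Ȳ_D} = S_{Ȳ_R} − S_{Ȳ_R Ȳ_D} S_{Ȳ_D}⁺ S_{Ȳ_D Ȳ_R}` has rank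
`min r ((s + t − d)⁺)` (truncated subtraction). -/
theorem rank_conditional_covariance_relay_given_dest
    (r d s t : ℕ)
    (HSR : Matrix (Fin r) (Fin s) ℂ) (HTR : Matrix (Fin r) (Fin t) ℂ)
    (HSD : Matrix (Fin d) (Fin s) ℂ) (HTD : Matrix (Fin d) (Fin t) ℂ)
    (SX : Matrix (Fin s) (Fin s) ℂ) (SXT : Matrix (Fin t) (Fin t) ℂ)
    (hSX : SX.PosDef) (hSXT : SXT.PosDef)
    (HR : Matrix (Fin r) (Fin s ⊕ Fin t) ℂ)
    (hHR : HR = Matrix.of fun i => Sum.elim (HSR i) (HTR i))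
    (HD : Matrix (Fin d) (Fin s ⊕ Fin t) ℂ)
    (hHD : HD = Matrix.of fun i => Sum.elim (HSD i) (HTD i))
    -- genericity: full rank of the stacked channel matrix and of `HD`
    (hgen1 : (Matrix.of (Sum.elim (fun i => HR i) (fun i => HD i)) :
        Matrix (Fin r ⊕ Fin d) (Fin s ⊕ Fin t) ℂ).rank = min (r + d) (s + t))
    (hgen2 : HD.rank = min d (s + t))
    (S : Matrix (Fin s ⊕ Fin t) (Fin s ⊕ Fin t) ℂ)
    (hS : S = Matrix.fromBlocks SX 0 0 SXT)
    (P : Matrix (Fin d) (Fin d) ℂ)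
    (hP : IsMoorePenroseInv (HD * S * HDᴴ) P) :
    (HR * S * HRᴴ - (HR * S * HDᴴ) * P * (HR * S * HDᴴ)ᴴ).rank
      = min r (s + t - d) := by
  classical
  -- square root of S
  set TX := hSX.posSemidef.sqrt with hTXdef
  set TXT := hSXT.posSemidef.sqrt with hTXTdef
  set T : Matrix (Fin s ⊕ Fin t) (Fin s ⊕ Fin t) ℂ := fromBlocks TX 0 0 TXT with hT
  have hTmul : T * T = S := by
    rw [hT, fromBlocks_multiply, hS]
    simp [hSX.posSemidef.sqrt_mul_self, hSXT.posSemidef.sqrt_mul_self]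
    exact ⟨hSX.posSemidef.sqrt_mul_self, hSXT.posSemidef.sqrt_mul_self⟩
  have hTH : Tᴴ = T := by
    rw [hT, fromBlocks_conjTranspose]
    simp [hSX.posSemidef.posSemidef_sqrt.1.eq, hSXT.posSemidef.posSemidef_sqrt.1.eq]
    exact ⟨hSX.posSemidef.posSemidef_sqrt.1.eq, hSXT.posSemidef.posSemidef_sqrt.1.eq⟩
  have hTdet : IsUnit T.det := by
    rw [hT, det_fromBlocks_zero₂₁]
    have hx : IsUnit TX.det := by
      have h : TX.det * TX.det = SX.det := by
        rw [← det_mul, hSX.posSemidef.sqrt_mul_self]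
      exact isUnit_of_mul_isUnit_left (h ▸ hSX.det_pos.ne'.isUnit)
    have hy : IsUnit TXT.det := by
      have h : TXT.det * TXT.det = SXT.det := by
        rw [← det_mul, hSXT.posSemidef.sqrt_mul_self]
      exact isUnit_of_mul_isUnit_left (h ▸ hSXT.det_pos.ne'.isUnit)
    exact hx.mul hy
  set R := HR * T with hRdef
  set D := HD * T with hDdef
  have hDH : Dᴴ = T * HDᴴ := by rw [hDdef, conjTranspose_mul, hTH]
  have hRH : Rᴴ = T * HRᴴ := by rw [hRdef, conjTranspose_mul, hTH]
  have hC : HD * S * HDᴴ = D * Dᴴ := by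
    rw [hDdef, hDH, ← hTmul]; simp only [Matrix.mul_assoc]
  have hA : HR * S * HRᴴ = R * Rᴴ := by
    rw [hRdef, hRH, ← hTmul]; simp only [Matrix.mul_assoc]
  have hB : HR * S * HDᴴ = R * Dᴴ := by
    rw [hRdef, hDH, ← hTmul]; simp only [Matrix.mul_assoc]
  obtain ⟨h1, h2, -, -⟩ := hP
  rw [hC] at h1 h2
  have hCPD : (D * Dᴴ) * P * D = D := my_cpd_eq D P h1
  have hCPD' : D * (Dᴴ * (P * D)) = D := by
    simpa only [Matrix.mul_assoc] using hCPD
  set Q := Dᴴ * P * D with hQdef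
  have hDQ : D * Q = D := by
    rw [hQdef]; simpa only [Matrix.mul_assoc] using hCPD'
  have h2' : P * (D * (Dᴴ * P)) = P := by
    simpa only [Matrix.mul_assoc] using h2
  have hDPH : Dᴴ * (Pᴴ * (D * Dᴴ)) = Dᴴ := by
    have := congrArg conjTranspose hCPD'
    simpa only [conjTranspose_mul, conjTranspose_conjTranspose, Matrix.mul_assoc] using this
  have hQH : Qᴴ = Q := by
    rw [hQdef]
    have e1 : Dᴴ * (Pᴴ * (D * (Dᴴ * (P * D)))) = Dᴴ * (Pᴴ * D) := by rw [hCPD']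
    have e2 : Dᴴ * (Pᴴ * (D * (Dᴴ * (P * D)))) = Dᴴ * (P * D) := by
      calc Dᴴ * (Pᴴ * (D * (Dᴴ * (P * D))))
          = (Dᴴ * (Pᴴ * (D * Dᴴ))) * (P * D) := by simp only [Matrix.mul_assoc]
        _ = Dᴴ * (P * D) := by rw [hDPH]
    have step : Dᴴ * (Pᴴ * D) = Dᴴ * (P * D) := e1.symm.trans e2
    simpa only [conjTranspose_mul, conjTranspose_conjTranspose, Matrix.mul_assoc] using step
  have hQQ : Q * Q = Q := by
    rw [hQdef]
    calc (Dᴴ * P * D) * (Dᴴ * P * D)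
        = Dᴴ * ((P * (D * (Dᴴ * P))) * D) := by simp only [Matrix.mul_assoc]
      _ = Dᴴ * (P * D) := by rw [h2']
      _ = Dᴴ * P * D := by simp only [Matrix.mul_assoc]
  have hQDH : Q * Dᴴ = Dᴴ := by
    have := congrArg conjTranspose hDQ
    rwa [conjTranspose_mul, hQH] at this
  have h1Q : (1 - Q) * (1 - Q) = 1 - Q := by
    simp [Matrix.sub_mul, Matrix.mul_sub, hQQ]
  set N := R * (1 - Q) with hNdef
  have hNH : Nᴴ = (1 - Q) * Rᴴ := by
    rw [hNdef, conjTranspose_mul, conjTranspose_sub, conjTranspose_one, hQH]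
  have hSchur : HR * S * HRᴴ - HR * S * HDᴴ * P * (HR * S * HDᴴ)ᴴ = N * Nᴴ := by
    rw [hA, hB]
    have hBHT : (R * Dᴴ)ᴴ = D * Rᴴ := by
      simp [conjTranspose_mul]
    rw [hBHT, hNdef, hNH]
    have e1 : (R * (1 - Q)) * ((1 - Q) * Rᴴ) = (R * ((1 - Q) * (1 - Q))) * Rᴴ := by
      simp only [Matrix.mul_assoc]
    rw [e1, h1Q, Matrix.mul_sub, Matrix.mul_one, Matrix.sub_mul]
    congr 1
    simp only [hQdef, Matrix.mul_assoc]
  rw [hSchur, rank_self_mul_conjTranspose]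
  have hgen1' : (fromRows HR HD).rank = min (r + d) (s + t) := hgen1
  have hrankRD : (fromRows R D).rank = min (r + d) (s + t) := by
    rw [hRdef, hDdef, ← fromRows_mul, rank_mul_eq_left_of_isUnit_det _ _ hTdet, hgen1']
  have hrankD : D.rank = min d (s + t) := by
    rw [hDdef, rank_mul_eq_left_of_isUnit_det _ _ hTdet, hgen2]
  set U := fromBlocks (1 : Matrix (Fin r) (Fin r) ℂ) (R * Dᴴ * P)
      (0 : Matrix (Fin d) (Fin r) ℂ) (1 : Matrix (Fin d) (Fin d) ℂ) with hUdef
  have hRQ : R * Dᴴ * P * D = R * Q := by simp only [hQdef, Matrix.mul_assoc]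
  have hUfac : fromRows R D = U * fromRows N D := by
    rw [hUdef, fromBlocks_mul_fromRows, fromRows_ext_iff]
    constructor
    · rw [Matrix.one_mul, hNdef, hRQ, Matrix.mul_sub, Matrix.mul_one]
      abel
    · rw [Matrix.zero_mul, Matrix.one_mul, zero_add]
  have hUdet : IsUnit U.det := by
    rw [hUdef, det_fromBlocks_zero₂₁]; simp
  have hrankND : (fromRows N D).rank = min (r + d) (s + t) := by
    rw [← hrankRD, hUfac, rank_mul_eq_right_of_isUnit_det _ _ hUdet]
  have hNDH : N * Dᴴ = 0 := by
    have h0 : (1 - Q) * Dᴴ = 0 := by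
      rw [Matrix.sub_mul, Matrix.one_mul, hQDH, sub_self]
    rw [hNdef, Matrix.mul_assoc, h0, Matrix.mul_zero]
  have hDNH : D * Nᴴ = 0 := by
    have := congrArg conjTranspose hNDH
    simpa only [conjTranspose_mul, conjTranspose_conjTranspose, conjTranspose_zero] using this
  have hGram : fromRows N D * (fromRows N D)ᴴ = fromBlocks (N * Nᴴ) 0 0 (D * Dᴴ) := by
    rw [conjTranspose_fromRows_eq_fromCols_conjTranspose, fromRows_mul_fromCols,
      hNDH, hDNH]
  have hsum : (fromRows N D).rank = N.rank + D.rank := by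
    rw [← rank_self_mul_conjTranspose (fromRows N D), hGram, myrank_fromBlocks_diag,
      rank_self_mul_conjTranspose, rank_self_mul_conjTranspose]
  rw [hsum, hrankD] at hrankND
  omega
end
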